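/- arXiv:2510.08509 — 6 statements merged into one kernel-verified Lean document; each statement's English description precedes it below -/
import Mathlib

section
/- Let A'₁,...,A'_k be matrices with all absolute row-sums equal to 1, let D₀ = diag(d₀) with nonnegative entries, and let q be a probability distribution on [n₀] with q_i > 0 whenever (d₀)_i > 0. Define the random path (j₀,...,j_k) by sampling j₀ ∼ q and j_ℓ with probability |[A'_ℓ]_{j_{ℓ-1}, j_ℓ}|, and set the matrix-valued random variable X(j₀,...,j_k) = (d₀)_{j₀}/q_{j₀} · (∏_{ℓ=1}^k sign([A'_ℓ]_{j_{ℓ-1},j_ℓ})) · e_{j₀} e_{j_k}ᵀ. Then E[X] = D₀ A'₁ ⋯ A'_k. -/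
open scoped BigOperators

/-- Left-to-right product A₀ A₁ ⋯ A_{m-1}. -/
noncomputable def leftProd (n : ℕ → ℕ)
    (A : ∀ ℓ : ℕ, Matrix (Fin (n ℓ)) (Fin (n (ℓ + 1))) ℝ) :
    ∀ m : ℕ, Matrix (Fin (n 0)) (Fin (n m)) ℝ
  | 0 => 1
  | (m + 1) => leftProd n A m * A m

/-- sign(x) = 1 if x ≥ 0, −1 otherwise. -/
noncomputable def rwSign (x : ℝ) : ℝ := if 0 ≤ x then 1 else -1

/-- Probability of a path (j₀,…,j_k): q(j₀)·∏_ℓ |A'_ℓ|_{j_{ℓ-1} j_ℓ}. -/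
noncomputable def pathProb (k : ℕ) (n : ℕ → ℕ)
    (A' : ∀ ℓ : ℕ, Matrix (Fin (n ℓ)) (Fin (n (ℓ + 1))) ℝ)
    (q : Fin (n 0) → ℝ) (ω : (ℓ : Fin (k + 1)) → Fin (n ℓ.val)) : ℝ :=
  q (ω ⟨0, Nat.succ_pos k⟩) * ∏ ℓ : Fin k, |A' ℓ (ω ℓ.castSucc) (ω ℓ.succ)|

/-- The (i,j') entry of the random matrix
    X(j₀,…,j_k) = (d₀)_{j₀}/q_{j₀} · (∏ signs) · e_{j₀} e_{j_k}ᵀ. -/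
noncomputable def pathX (k : ℕ) (n : ℕ → ℕ)
    (A' : ∀ ℓ : ℕ, Matrix (Fin (n ℓ)) (Fin (n (ℓ + 1))) ℝ)
    (d q : Fin (n 0) → ℝ) (i : Fin (n 0)) (j' : Fin (n k))
    (ω : (ℓ : Fin (k + 1)) → Fin (n ℓ.val)) : ℝ :=
  d (ω ⟨0, Nat.succ_pos k⟩) / q (ω ⟨0, Nat.succ_pos k⟩) *
    (∏ ℓ : Fin k, rwSign (A' ℓ (ω ℓ.castSucc) (ω ℓ.succ))) *
    (if i = ω ⟨0, Nat.succ_pos k⟩ ∧ j' = ω ⟨k, Nat.lt_succ_self k⟩ then 1 else 0)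

lemma rwKey (n : ℕ → ℕ) (A' : ∀ ℓ : ℕ, Matrix (Fin (n ℓ)) (Fin (n (ℓ + 1))) ℝ) :
    ∀ (k : ℕ) (i : Fin (n 0)) (g : Fin (n k) → ℝ),
    ∑ ω : (ℓ : Fin (k + 1)) → Fin (n ℓ.val),
      (if i = ω ⟨0, Nat.succ_pos k⟩ then
        (∏ ℓ : Fin k, A' ℓ (ω ℓ.castSucc) (ω ℓ.succ)) * g (ω ⟨k, Nat.lt_succ_self k⟩) else 0)
      = ∑ j, leftProd n A' k i j * g j := by
  intro k
  induction k with
  | zero =>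
    intro i g
    rw [← (Equiv.piUnique (fun ℓ : Fin 1 => Fin (n ℓ.val))).symm.sum_comp]
    simp [leftProd, Matrix.one_apply, Equiv.piUnique, eq_comm,
      show ∀ x : Fin (n 0), uniqueElim (α := fun ℓ : Fin 1 => Fin (n ℓ.val)) x (0 : Fin 1) = x
        from fun _ => rfl]
  | succ k ih =>
    intro i g
    rw [← (Fin.snocEquiv (fun ℓ : Fin (k + 2) => Fin (n ℓ.val))).sum_comp]
    rw [Fintype.sum_prod_type_right]
    simp only [Fin.snocEquiv, Equiv.coe_fn_mk]
    have h0 : (⟨0, Nat.succ_pos (k+1)⟩ : Fin (k+2)) = Fin.castSucc ⟨0, Nat.succ_pos k⟩ := rfl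
    have hlast : (⟨k+1, Nat.lt_succ_self (k+1)⟩ : Fin (k+2)) = Fin.last (k+1) := rfl
    simp only [h0, hlast, Fin.snoc_castSucc, Fin.snoc_last, Fin.prod_univ_castSucc,
      Fin.succ_castSucc, Fin.succ_last]
    have e0 : ∀ (p : (m : Fin (k+1)) → Fin (n m.castSucc.val)) (x : Fin (n (k+1+1-1))),
        Fin.snoc (α := fun m : Fin (k+2) => Fin (n m.val)) p x ⟨0, Nat.succ_pos (k+1)⟩
          = p ⟨0, Nat.succ_pos k⟩ := by
      intro p x
      exact Fin.snoc_castSucc (α := fun m : Fin (k+2) => Fin (n m.val)) x p ⟨0, Nat.succ_pos k⟩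
    have elast : ∀ (p : (m : Fin (k+1)) → Fin (n m.castSucc.val)) (x : Fin (n (k+1+1-1))),
        Fin.snoc (α := fun m : Fin (k+2) => Fin (n m.val)) p x ⟨k+1, Nat.lt_succ_self (k+1)⟩
          = x := by
      intro p x
      exact Fin.snoc_last (α := fun m : Fin (k+2) => Fin (n m.val)) x p
    simp only [e0, elast]
    have swap : ∀ (p : (ℓ : Fin (k + 1)) → Fin (n ℓ.val)),
        (∑ x1 : Fin (n (k+1)), if i = p ⟨0, Nat.succ_pos k⟩ then
            (∏ ℓ : Fin k, A' ℓ (p ℓ.castSucc) (p ℓ.succ)) * A' k (p ⟨k, Nat.lt_succ_self k⟩) x1 * g x1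
          else 0)
          = (if i = p ⟨0, Nat.succ_pos k⟩ then
              (∏ ℓ : Fin k, A' ℓ (p ℓ.castSucc) (p ℓ.succ)) *
                (∑ x1, A' k (p ⟨k, Nat.lt_succ_self k⟩) x1 * g x1) else 0) := by
      intro p
      by_cases h : i = p ⟨0, Nat.succ_pos k⟩ <;> simp only [h, eq_self_iff_true, ↓reduceIte, Finset.sum_const_zero, Finset.mul_sum, mul_assoc]
    refine Eq.trans (Finset.sum_congr rfl fun p _ => swap p) ?_
    refine Eq.trans (ih i (fun j => ∑ x1, A' k j x1 * g x1)) ?_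
    show _ = ∑ j' : Fin (n (k+1)), (leftProd n A' k * A' k) i j' * g j'
    simp only [Matrix.mul_apply, Finset.sum_mul, mul_assoc]
    rw [Finset.sum_comm]
    simp [Finset.mul_sum, mul_assoc]

lemma abs_mul_rwSign (a : ℝ) : |a| * rwSign a = a := by
  unfold rwSign
  rcases le_or_gt 0 a with h | h
  · rw [abs_of_nonneg h, if_pos h, mul_one]
  · rw [abs_of_neg h, if_neg (not_le.mpr h)]; ring

/-- Random walk estimator: E[X] = D₀ A'₁ ⋯ A'_k (entrywise). -/
theorem random_walk_estimator_mean (k : ℕ) (n : ℕ → ℕ)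
    (A' : ∀ ℓ : ℕ, Matrix (Fin (n ℓ)) (Fin (n (ℓ + 1))) ℝ)
    (hrow : ∀ ℓ < k, ∀ i, ∑ j, |A' ℓ i j| = 1)
    (d : Fin (n 0) → ℝ) (hd : ∀ i, 0 ≤ d i)
    (q : Fin (n 0) → ℝ) (hq0 : ∀ i, 0 ≤ q i) (hq1 : ∑ i, q i = 1)
    (hqd : ∀ i, 0 < d i → 0 < q i) :
    ∀ (i : Fin (n 0)) (j' : Fin (n k)),
      (∑ ω : (ℓ : Fin (k + 1)) → Fin (n ℓ.val),
          pathProb k n A' q ω * pathX k n A' d q i j' ω) =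
        (Matrix.diagonal d * leftProd n A' k) i j' := by
  intro i j'
  have hqdq : ∀ m, q m * (d m / q m) = d m := by
    intro m
    rcases eq_or_ne (q m) 0 with h | h
    · have hdm : d m = 0 := by
        by_contra hc
        have := hqd m (lt_of_le_of_ne (hd m) (Ne.symm hc))
        exact absurd h (ne_of_gt this)
      rw [h, hdm]; ring
    · field_simp
  have step : ∀ ω : (ℓ : Fin (k + 1)) → Fin (n ℓ.val),
      pathProb k n A' q ω * pathX k n A' d q i j' ω
        = (if i = ω ⟨0, Nat.succ_pos k⟩ then
            (∏ ℓ : Fin k, A' ℓ (ω ℓ.castSucc) (ω ℓ.succ)) *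
              (if j' = ω ⟨k, Nat.lt_succ_self k⟩ then d i else 0) else 0) := by
    intro ω
    unfold pathProb pathX
    have hprod : (∏ ℓ : Fin k, |A' ℓ (ω ℓ.castSucc) (ω ℓ.succ)|) *
        (∏ ℓ : Fin k, rwSign (A' ℓ (ω ℓ.castSucc) (ω ℓ.succ)))
        = ∏ ℓ : Fin k, A' ℓ (ω ℓ.castSucc) (ω ℓ.succ) := by
      rw [← Finset.prod_mul_distrib]
      exact Finset.prod_congr rfl fun ℓ _ => abs_mul_rwSign _
    by_cases h1 : i = ω ⟨0, Nat.succ_pos k⟩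
    · by_cases h2 : j' = ω ⟨k, Nat.lt_succ_self k⟩
      · rw [if_pos ⟨h1, h2⟩, if_pos h1, if_pos h2, mul_one]
        calc q (ω ⟨0, Nat.succ_pos k⟩) * (∏ ℓ : Fin k, |A' ℓ (ω ℓ.castSucc) (ω ℓ.succ)|) *
              (d (ω ⟨0, Nat.succ_pos k⟩) / q (ω ⟨0, Nat.succ_pos k⟩) *
                ∏ ℓ : Fin k, rwSign (A' ℓ (ω ℓ.castSucc) (ω ℓ.succ)))
            = (q (ω ⟨0, Nat.succ_pos k⟩) *
                (d (ω ⟨0, Nat.succ_pos k⟩) / q (ω ⟨0, Nat.succ_pos k⟩))) *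
              ((∏ ℓ : Fin k, |A' ℓ (ω ℓ.castSucc) (ω ℓ.succ)|) *
                ∏ ℓ : Fin k, rwSign (A' ℓ (ω ℓ.castSucc) (ω ℓ.succ))) := by ring
          _ = _ := by rw [hqdq, hprod, ← h1]; ring
      · rw [if_neg (fun hc => h2 hc.2), if_pos h1, if_neg h2]; ring
    · rw [if_neg (fun hc => h1 hc.1), if_neg h1]; ring
  rw [Finset.sum_congr rfl fun ω _ => step ω,
    rwKey n A' k i (fun j => if j' = j then d i else 0)]
  rw [Matrix.diagonal_mul]
  simp [mul_comm]
end

section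
/- In the random-walk estimator for a matrix product (with X(j₀,...,j_k) = (d₀)_{j₀}/q_{j₀} · s(j₀,...,j_k) · e_{j₀} e_{j_k}ᵀ as defined), each entry satisfies Var[X_{ij}] ≤ ((d₀)_i / q_i) · [Ā₁⋯Ā_k]_{ij}, where Ā_ℓ denotes the entrywise absolute values of A_ℓ = the ℓ-th factor before normalization. -/
open scoped BigOperators

lemma pathSum (n : ℕ → ℕ) (B : ∀ ℓ : ℕ, Matrix (Fin (n ℓ)) (Fin (n (ℓ + 1))) ℝ) :
    ∀ (k : ℕ) (i : Fin (n 0)) (j' : Fin (n k)),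
    ∑ ω : (ℓ : Fin (k + 1)) → Fin (n ℓ.val),
      (if i = ω ⟨0, Nat.succ_pos k⟩ ∧ j' = ω ⟨k, Nat.lt_succ_self k⟩ then
        ∏ ℓ : Fin k, B ℓ (ω ℓ.castSucc) (ω ℓ.succ) else 0)
      = leftProd n B k i j' := by
  intro k
  induction k with
  | zero =>
    intro i j'
    simp only [Fin.prod_univ_zero]
    rw [show (leftProd n B 0 : Matrix _ _ ℝ) i j' = if i = j' then 1 else 0 from
      Matrix.one_apply]
    rcases eq_or_ne i j' with rfl | h
    · rw [if_pos rfl]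
      set ω₀ : (ℓ : Fin 1) → Fin (n ℓ.val) :=
        Fin.cases (motive := fun ℓ => Fin (n ℓ.val)) i (fun j => j.elim0) with hω₀
      rw [Finset.sum_eq_single ω₀]
      · simp [hω₀]
      · intro ω _ hω
        refine if_neg fun hc => hω (funext fun ℓ => ?_)
        have hℓ : ℓ = ⟨0, Nat.succ_pos 0⟩ := Subsingleton.elim _ _
        rw [hℓ]; exact hc.1.symm
      · intro h; exact absurd (Finset.mem_univ _) h
    · rw [if_neg h]
      refine Finset.sum_eq_zero fun ω _ => if_neg ?_
      rintro ⟨h1, h2⟩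
      exact h (h1.trans h2.symm)
  | succ k ih =>
    intro i j'
    rw [← (Fin.snocEquiv (fun ℓ : Fin (k + 2) => Fin (n ℓ.val))).sum_comp,
      Fintype.sum_prod_type]
    simp only [Fin.snocEquiv, Equiv.coe_fn_mk]
    have key : ∀ (x : Fin (n (k+1))) (y : (i : Fin (k + 1)) → Fin (n i.castSucc.val)),
        (if i = Fin.snoc (α := fun ℓ : Fin (k+2) => Fin (n ℓ.val)) y x ⟨0, Nat.succ_pos (k+1)⟩ ∧
            j' = Fin.snoc (α := fun ℓ : Fin (k+2) => Fin (n ℓ.val)) y x ⟨k + 1, Nat.lt_succ_self (k+1)⟩ then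
          ∏ ℓ : Fin (k + 1), B ℓ (Fin.snoc (α := fun ℓ : Fin (k+2) => Fin (n ℓ.val)) y x ℓ.castSucc)
            (Fin.snoc (α := fun ℓ : Fin (k+2) => Fin (n ℓ.val)) y x ℓ.succ) else 0)
        = (if i = y ⟨0, Nat.succ_pos k⟩ ∧ j' = x then
            (∏ ℓ : Fin k, B ℓ (y ℓ.castSucc) (y ℓ.succ)) * B k (y (Fin.last k)) x
            else 0) := by
      intro x y
      have h0 : Fin.snoc (α := fun ℓ : Fin (k+2) => Fin (n ℓ.val)) y x ⟨0, Nat.succ_pos (k+1)⟩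
          = y ⟨0, Nat.succ_pos k⟩ := by
        exact Fin.snoc_castSucc (α := fun ℓ : Fin (k+2) => Fin (n ℓ.val)) (p := y) (x := x) (i := ⟨0, Nat.succ_pos k⟩)
      have hl : Fin.snoc (α := fun ℓ : Fin (k+2) => Fin (n ℓ.val)) y x
          ⟨k + 1, Nat.lt_succ_self (k+1)⟩ = x := by
        exact Fin.snoc_last (α := fun ℓ : Fin (k+2) => Fin (n ℓ.val)) (p := y) (x := x)
      rw [h0, hl]
      congr 1
      rw [Fin.prod_univ_castSucc]
      congr 1
      · refine Finset.prod_congr rfl fun ℓ _ => ?_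
        have e1 : Fin.snoc (α := fun ℓ : Fin (k+2) => Fin (n ℓ.val)) y x ℓ.castSucc.castSucc
            = y ℓ.castSucc := by
          exact Fin.snoc_castSucc (α := fun ℓ : Fin (k+2) => Fin (n ℓ.val)) (p := y) (x := x) (i := ℓ.castSucc)
        have e2 : Fin.snoc (α := fun ℓ : Fin (k+2) => Fin (n ℓ.val)) y x ℓ.castSucc.succ
            = y ℓ.succ := by
          exact Fin.snoc_castSucc (α := fun ℓ : Fin (k+2) => Fin (n ℓ.val)) (p := y) (x := x) (i := ℓ.succ)
        rw [e1, e2]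
        rfl
      · have e1 : Fin.snoc (α := fun ℓ : Fin (k+2) => Fin (n ℓ.val)) y x (Fin.last k).castSucc
            = y (Fin.last k) := by
          exact Fin.snoc_castSucc (α := fun ℓ : Fin (k+2) => Fin (n ℓ.val)) (p := y) (x := x) (i := Fin.last k)
        have e2 : Fin.snoc (α := fun ℓ : Fin (k+2) => Fin (n ℓ.val)) y x (Fin.last k).succ
            = x := by
          exact Fin.snoc_last (α := fun ℓ : Fin (k+2) => Fin (n ℓ.val)) (p := y) (x := x)
        rw [e1, e2]
        rfl
    refine Eq.trans (Finset.sum_congr rfl fun x _ => Finset.sum_congr rfl fun y _ => key x y) ?_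
    rw [Finset.sum_comm]
    have step : ∀ y : (i : Fin (k + 1)) → Fin (n i.castSucc.val),
        (∑ x : Fin (n (k + 1)), if i = y ⟨0, Nat.succ_pos k⟩ ∧ j' = x then
          (∏ ℓ : Fin k, B ℓ (y ℓ.castSucc) (y ℓ.succ)) * B k (y (Fin.last k)) x else 0)
        = ∑ m : Fin (n k), (if i = y ⟨0, Nat.succ_pos k⟩ ∧ m = y (Fin.last k) then
            (∏ ℓ : Fin k, B ℓ (y ℓ.castSucc) (y ℓ.succ)) else 0) * B k m j' := by
      intro y
      by_cases h : i = y ⟨0, Nat.succ_pos k⟩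
      · simp only [h, true_and, ite_mul, zero_mul]
        rw [Finset.sum_ite_eq, Finset.sum_ite_eq']
        simp
      · simp [show ¬ i = y 0 from h]
    refine Eq.trans (Finset.sum_congr rfl fun y _ => step y) ?_
    rw [Finset.sum_comm]
    rw [show leftProd n B (k + 1) = leftProd n B k * B k from rfl, Matrix.mul_apply]
    refine Finset.sum_congr rfl fun m _ => ?_
    rw [← Finset.sum_mul]
    exact congrArg (fun t => t * B k m j') (ih i m)

/-- Random walk estimator: Var[X_{ij}] ≤ ((d₀)_i / q_i) · [Ā₁⋯Ā_k]_{ij}, where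
    Ā₁⋯Ā_k = diag(d₀) · |A'₁|⋯|A'_k| via the stochastic decomposition. -/
theorem random_walk_estimator_variance (k : ℕ) (n : ℕ → ℕ)
    (A' : ∀ ℓ : ℕ, Matrix (Fin (n ℓ)) (Fin (n (ℓ + 1))) ℝ)
    (hrow : ∀ ℓ < k, ∀ i, ∑ j, |A' ℓ i j| = 1)
    (d : Fin (n 0) → ℝ) (hd : ∀ i, 0 ≤ d i)
    (q : Fin (n 0) → ℝ) (hq0 : ∀ i, 0 ≤ q i) (hq1 : ∑ i, q i = 1)
    (hqd : ∀ i, 0 < d i → 0 < q i) :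
    ∀ (i : Fin (n 0)) (j' : Fin (n k)),
      (∑ ω : (ℓ : Fin (k + 1)) → Fin (n ℓ.val),
          pathProb k n A' q ω * (pathX k n A' d q i j' ω) ^ 2) -
        (∑ ω : (ℓ : Fin (k + 1)) → Fin (n ℓ.val),
            pathProb k n A' q ω * pathX k n A' d q i j' ω) ^ 2 ≤
      d i / q i *
        (Matrix.diagonal d * leftProd n (fun ℓ => (A' ℓ).map (fun x => |x|)) k) i j' := by
  intro i j'
  set B : ∀ ℓ : ℕ, Matrix (Fin (n ℓ)) (Fin (n (ℓ + 1))) ℝ :=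
    fun ℓ => (A' ℓ).map (fun x => |x|) with hB
  have term_eq : ∀ ω : (ℓ : Fin (k + 1)) → Fin (n ℓ.val),
      pathProb k n A' q ω * (pathX k n A' d q i j' ω) ^ 2
      = d i * (d i / q i) *
        (if i = ω ⟨0, Nat.succ_pos k⟩ ∧ j' = ω ⟨k, Nat.lt_succ_self k⟩ then
          ∏ ℓ : Fin k, B ℓ (ω ℓ.castSucc) (ω ℓ.succ) else 0) := by
    intro ω
    unfold pathProb pathX
    by_cases hc : i = ω ⟨0, Nat.succ_pos k⟩ ∧ j' = ω ⟨k, Nat.lt_succ_self k⟩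
    · rw [if_pos hc, if_pos hc, ← hc.1]
      have hs : (∏ ℓ : Fin k, rwSign (A' ℓ (ω ℓ.castSucc) (ω ℓ.succ))) ^ 2 = 1 := by
        rw [← Finset.prod_pow]
        refine Finset.prod_eq_one fun ℓ _ => ?_
        unfold rwSign; split <;> norm_num
      have hq : q i * (d i / q i) ^ 2 = d i * (d i / q i) := by
        rcases eq_or_ne (q i) 0 with h | h
        · simp [h]
        · field_simp
      have hprod : (∏ ℓ : Fin k, |A' ℓ (ω ℓ.castSucc) (ω ℓ.succ)|)
          = ∏ ℓ : Fin k, B ℓ (ω ℓ.castSucc) (ω ℓ.succ) := by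
        simp [hB, Matrix.map_apply]
      rw [← hprod]
      rw [mul_one, mul_pow, hs, mul_one]
      linear_combination (∏ ℓ : Fin k, |A' ℓ (ω ℓ.castSucc) (ω ℓ.succ)|) * hq
    · rw [if_neg hc, if_neg hc]
      ring
  have h1 : (∑ ω : (ℓ : Fin (k + 1)) → Fin (n ℓ.val),
      pathProb k n A' q ω * (pathX k n A' d q i j' ω) ^ 2)
      = d i * (d i / q i) * leftProd n B k i j' := by
    rw [Finset.sum_congr rfl fun ω _ => term_eq ω, ← Finset.mul_sum, pathSum n B k i j']
  rw [h1]
  have h2 : d i / q i * (Matrix.diagonal d * leftProd n B k) i j'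
      = d i * (d i / q i) * leftProd n B k i j' := by
    rw [Matrix.diagonal_mul]
    ring
  rw [h2]
  exact sub_le_self _ (sq_nonneg _)
end

section
/- In the random-walk estimator with initial distribution q = d₀/‖d₀‖₁, the entrywise variances satisfy max_{i,j} Var[X_{ij}] ≤ ‖Ā₁⋯Ā_k‖_{∞,∞} · ‖Ā₁⋯Ā_k‖_{1,1}, and the trace of the covariance matrix satisfies Tr[Σ] = Σ_{ij} Var[X_{ij}] ≤ ‖Ā₁⋯Ā_k‖_{1,1}². -/
open scoped BigOperators

lemma leftProd_nonneg (n : ℕ → ℕ)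
    (B : ∀ ℓ : ℕ, Matrix (Fin (n ℓ)) (Fin (n (ℓ + 1))) ℝ)
    (hB : ∀ ℓ i j, 0 ≤ B ℓ i j) :
    ∀ m i j, 0 ≤ leftProd n B m i j := by
  intro m
  induction m with
  | zero =>
    intro i j
    simp only [leftProd, Matrix.one_apply]
    split <;> norm_num
  | succ m ih =>
    intro i j
    simp only [leftProd, Matrix.mul_apply]
    exact Finset.sum_nonneg fun t _ => mul_nonneg (ih i t) (hB m t j)

lemma leftProd_row_sum (n : ℕ → ℕ) (k : ℕ)
    (B : ∀ ℓ : ℕ, Matrix (Fin (n ℓ)) (Fin (n (ℓ + 1))) ℝ)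
    (hB : ∀ ℓ < k, ∀ i, ∑ j, B ℓ i j = 1) :
    ∀ m ≤ k, ∀ i, ∑ j, leftProd n B m i j = 1 := by
  intro m
  induction m with
  | zero =>
    intro _ i
    simp [leftProd, Matrix.one_apply]
  | succ m ih =>
    intro hm i
    simp only [leftProd, Matrix.mul_apply]
    rw [Finset.sum_comm]
    calc (∑ t, ∑ j, leftProd n B m i t * B m t j)
        = ∑ t, leftProd n B m i t * ∑ j, B m t j := by
          simp [Finset.mul_sum]
      _ = ∑ t, leftProd n B m i t := by
          refine Finset.sum_congr rfl fun t _ => ?_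
          rw [hB m (Nat.lt_of_succ_le hm) t, mul_one]
      _ = 1 := ih (Nat.le_of_succ_le hm) i

lemma pathSum_eq (n : ℕ → ℕ)
    (B : ∀ ℓ : ℕ, Matrix (Fin (n ℓ)) (Fin (n (ℓ + 1))) ℝ) :
    ∀ (k : ℕ) (i : Fin (n 0)) (j : Fin (n k)),
    (∑ ω : (ℓ : Fin (k + 1)) → Fin (n ℓ.val),
      (if i = ω ⟨0, Nat.succ_pos k⟩ ∧ j = ω ⟨k, Nat.lt_succ_self k⟩ then (1:ℝ) else 0) *
        ∏ ℓ : Fin k, B ℓ (ω ℓ.castSucc) (ω ℓ.succ)) = leftProd n B k i j := by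
  intro k
  induction k with
  | zero =>
    intro i j
    rw [Fintype.sum_equiv (@Equiv.piUnique (Fin (0 + 1)) (inferInstanceAs (Unique (Fin 1)))
        (fun ℓ => Fin (n ℓ.val))) _
      (fun x : Fin (n 0) => if i = x ∧ j = x then (1:ℝ) else 0)
      (fun ω => by simp [Equiv.piUnique]; rfl)]
    show _ = (1 : Matrix (Fin (n 0)) (Fin (n 0)) ℝ) i j
    rw [Matrix.one_apply]
    by_cases h : i = j
    · subst h
      simp
    · rw [if_neg h, Finset.sum_eq_zero]
      intro x _
      rw [if_neg]
      rintro ⟨rfl, rfl⟩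
      exact h rfl
  | succ k ih =>
    intro i j
    have key : ∀ (x : Fin (n (k+1))) (w : (ℓ : Fin (k+1)) → Fin (n ℓ.val)),
        (if i = Fin.snoc (α := fun ℓ : Fin (k+2) => Fin (n ℓ.val)) w x ⟨0, Nat.succ_pos (k+1)⟩ ∧
            j = Fin.snoc (α := fun ℓ : Fin (k+2) => Fin (n ℓ.val)) w x ⟨k+1, Nat.lt_succ_self (k+1)⟩
          then (1:ℝ) else 0) *
          ∏ ℓ : Fin (k+1), B ℓ
            (Fin.snoc (α := fun ℓ : Fin (k+2) => Fin (n ℓ.val)) w x ℓ.castSucc)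
            (Fin.snoc (α := fun ℓ : Fin (k+2) => Fin (n ℓ.val)) w x ℓ.succ)
        = (if i = w ⟨0, Nat.succ_pos k⟩ ∧ j = x then (1:ℝ) else 0) *
          ((∏ ℓ : Fin k, B ℓ (w ℓ.castSucc) (w ℓ.succ)) * B k (w (Fin.last k)) x) := by
      intro x w
      have h0 : Fin.snoc (α := fun ℓ : Fin (k+2) => Fin (n ℓ.val)) w x ⟨0, Nat.succ_pos (k+1)⟩
          = w ⟨0, Nat.succ_pos k⟩ := by
        show Fin.snoc (α := fun ℓ : Fin (k+2) => Fin (n ℓ.val)) w x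
          (Fin.castSucc ⟨0, Nat.succ_pos k⟩) = w ⟨0, Nat.succ_pos k⟩
        rw [Fin.snoc_castSucc]
      have hl : Fin.snoc (α := fun ℓ : Fin (k+2) => Fin (n ℓ.val)) w x ⟨k+1, Nat.lt_succ_self (k+1)⟩
          = x := by
        show Fin.snoc (α := fun ℓ : Fin (k+2) => Fin (n ℓ.val)) w x (Fin.last (k+1)) = x
        rw [Fin.snoc_last]
      rw [h0, hl, Fin.prod_univ_castSucc]
      congr 1
      congr 1
      · refine Finset.prod_congr rfl fun ℓ _ => ?_
        have e1 : Fin.snoc (α := fun ℓ : Fin (k+2) => Fin (n ℓ.val)) w x ℓ.castSucc.castSucc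
            = w ℓ.castSucc := by
          show Fin.snoc (α := fun ℓ : Fin (k+2) => Fin (n ℓ.val)) w x
            (Fin.castSucc ℓ.castSucc) = w ℓ.castSucc
          rw [Fin.snoc_castSucc]
        have e2 : Fin.snoc (α := fun ℓ : Fin (k+2) => Fin (n ℓ.val)) w x ℓ.castSucc.succ
            = w ℓ.succ := by
          show Fin.snoc (α := fun ℓ : Fin (k+2) => Fin (n ℓ.val)) w x
            (Fin.castSucc ℓ.succ) = w ℓ.succ
          rw [Fin.snoc_castSucc]
        rw [e1, e2]
        rfl
      · have e3 : Fin.snoc (α := fun ℓ : Fin (k+2) => Fin (n ℓ.val)) w x (Fin.last k).castSucc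
            = w (Fin.last k) := by
          show Fin.snoc (α := fun ℓ : Fin (k+2) => Fin (n ℓ.val)) w x
            (Fin.castSucc (Fin.last k)) = w (Fin.last k)
          rw [Fin.snoc_castSucc]
        have e4 : Fin.snoc (α := fun ℓ : Fin (k+2) => Fin (n ℓ.val)) w x (Fin.last k).succ
            = x := by
          show Fin.snoc (α := fun ℓ : Fin (k+2) => Fin (n ℓ.val)) w x (Fin.last (k+1)) = x
          rw [Fin.snoc_last]
        rw [e3, e4]
        rfl
    calc (∑ ω : (ℓ : Fin (k + 1 + 1)) → Fin (n ℓ.val),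
          (if i = ω ⟨0, Nat.succ_pos (k+1)⟩ ∧ j = ω ⟨k+1, Nat.lt_succ_self (k+1)⟩ then (1:ℝ) else 0) *
            ∏ ℓ : Fin (k+1), B ℓ (ω ℓ.castSucc) (ω ℓ.succ))
        = ∑ p : Fin (n (k+1)) × ((ℓ : Fin (k+1)) → Fin (n ℓ.val)),
            (if i = Fin.snoc (α := fun ℓ : Fin (k+2) => Fin (n ℓ.val)) p.2 p.1 ⟨0, Nat.succ_pos (k+1)⟩ ∧
                j = Fin.snoc (α := fun ℓ : Fin (k+2) => Fin (n ℓ.val)) p.2 p.1 ⟨k+1, Nat.lt_succ_self (k+1)⟩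
              then (1:ℝ) else 0) *
              ∏ ℓ : Fin (k+1), B ℓ
                (Fin.snoc (α := fun ℓ : Fin (k+2) => Fin (n ℓ.val)) p.2 p.1 ℓ.castSucc)
                (Fin.snoc (α := fun ℓ : Fin (k+2) => Fin (n ℓ.val)) p.2 p.1 ℓ.succ) := by
          refine (Fintype.sum_equiv (Fin.snocEquiv (fun ℓ : Fin (k+2) => Fin (n ℓ.val)))
            (fun p => (if i = Fin.snoc (α := fun ℓ : Fin (k+2) => Fin (n ℓ.val)) p.2 p.1 ⟨0, Nat.succ_pos (k+1)⟩ ∧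
                j = Fin.snoc (α := fun ℓ : Fin (k+2) => Fin (n ℓ.val)) p.2 p.1 ⟨k+1, Nat.lt_succ_self (k+1)⟩
              then (1:ℝ) else 0) *
              ∏ ℓ : Fin (k+1), B ℓ
                (Fin.snoc (α := fun ℓ : Fin (k+2) => Fin (n ℓ.val)) p.2 p.1 ℓ.castSucc)
                (Fin.snoc (α := fun ℓ : Fin (k+2) => Fin (n ℓ.val)) p.2 p.1 ℓ.succ))
            (fun ω => (if i = ω ⟨0, Nat.succ_pos (k+1)⟩ ∧ j = ω ⟨k+1, Nat.lt_succ_self (k+1)⟩ then (1:ℝ) else 0) *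
              ∏ ℓ : Fin (k+1), B ℓ (ω ℓ.castSucc) (ω ℓ.succ))
            (fun p => rfl)).symm
      _ = ∑ x : Fin (n (k+1)), ∑ w : (ℓ : Fin (k+1)) → Fin (n ℓ.val),
            (if i = w ⟨0, Nat.succ_pos k⟩ ∧ j = x then (1:ℝ) else 0) *
              ((∏ ℓ : Fin k, B ℓ (w ℓ.castSucc) (w ℓ.succ)) * B k (w (Fin.last k)) x) := by
          rw [Fintype.sum_prod_type]
          exact Finset.sum_congr rfl fun x _ => Finset.sum_congr rfl fun w _ => key x w
      _ = ∑ w : (ℓ : Fin (k+1)) → Fin (n ℓ.val),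
            ((if i = w ⟨0, Nat.succ_pos k⟩ then (1:ℝ) else 0) *
              ∏ ℓ : Fin k, B ℓ (w ℓ.castSucc) (w ℓ.succ)) * B k (w (Fin.last k)) j := by
          rw [Finset.sum_comm]
          refine Finset.sum_congr rfl fun w _ => ?_
          rw [Finset.sum_eq_single j]
          · simp [mul_assoc]
            left
            congr 1
            exact propext (and_iff_left rfl)
          · intro b _ hb
            rw [if_neg (fun h => hb h.2.symm), zero_mul]
          · intro h; exact absurd (Finset.mem_univ j) h
      _ = leftProd n B (k+1) i j := by
          show _ = (leftProd n B k * B k) i j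
          rw [Matrix.mul_apply]
          simp only [← ih]
          simp only [Finset.sum_mul]
          rw [Finset.sum_comm]
          refine Finset.sum_congr rfl fun w _ => ?_
          symm
          refine (Finset.sum_eq_single (w (Fin.last k)) ?_ ?_).trans ?_
          · intro b _ hb
            rw [if_neg (fun h => hb h.2), zero_mul, zero_mul]
          · intro h; exact absurd (Finset.mem_univ _) h
          · have hif : (if i = w ⟨0, Nat.succ_pos k⟩ ∧ w (Fin.last k) = w ⟨k, Nat.lt_succ_self k⟩
                then (1:ℝ) else 0) = (if i = w ⟨0, Nat.succ_pos k⟩ then (1:ℝ) else 0) :=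
              if_congr (and_iff_left rfl) rfl rfl
            rw [hif]

/-- Random walk estimator with q = d₀/‖d₀‖₁:
    max entrywise variance ≤ ‖Ā₁⋯Ā_k‖_{∞,∞}·‖Ā₁⋯Ā_k‖_{1,1} and
    Tr[Σ] = Σ_{ij} Var[X_{ij}] ≤ ‖Ā₁⋯Ā_k‖_{1,1}², where
    Ā₁⋯Ā_k = diag(d₀)·|A'₁|⋯|A'_k|. -/
theorem random_walk_estimator_variance_l1_sampling (k : ℕ) (n : ℕ → ℕ)
    (A' : ∀ ℓ : ℕ, Matrix (Fin (n ℓ)) (Fin (n (ℓ + 1))) ℝ)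
    (hrow : ∀ ℓ < k, ∀ i, ∑ j, |A' ℓ i j| = 1)
    (d : Fin (n 0) → ℝ) (hd : ∀ i, 0 ≤ d i) (hSum : 0 < ∑ i, d i) :
    (∀ (i : Fin (n 0)) (j' : Fin (n k)),
      (∑ ω : (ℓ : Fin (k + 1)) → Fin (n ℓ.val),
          pathProb k n A' (fun i' => d i' / ∑ i'', d i'') ω *
            (pathX k n A' d (fun i' => d i' / ∑ i'', d i'') i j' ω) ^ 2) -
        (∑ ω : (ℓ : Fin (k + 1)) → Fin (n ℓ.val),
            pathProb k n A' (fun i' => d i' / ∑ i'', d i'') ω *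
              pathX k n A' d (fun i' => d i' / ∑ i'', d i'') i j' ω) ^ 2 ≤
      (⨆ i', ⨆ j'',
          |(Matrix.diagonal d * leftProd n (fun ℓ => (A' ℓ).map (fun x => |x|)) k) i' j''|) *
        ∑ i', ∑ j'',
          |(Matrix.diagonal d * leftProd n (fun ℓ => (A' ℓ).map (fun x => |x|)) k) i' j''|) ∧
    (∑ i : Fin (n 0), ∑ j' : Fin (n k),
        ((∑ ω : (ℓ : Fin (k + 1)) → Fin (n ℓ.val),
            pathProb k n A' (fun i' => d i' / ∑ i'', d i'') ω *
              (pathX k n A' d (fun i' => d i' / ∑ i'', d i'') i j' ω) ^ 2) -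
          (∑ ω : (ℓ : Fin (k + 1)) → Fin (n ℓ.val),
              pathProb k n A' (fun i' => d i' / ∑ i'', d i'') ω *
                pathX k n A' d (fun i' => d i' / ∑ i'', d i'') i j' ω) ^ 2)) ≤
      (∑ i', ∑ j'',
          |(Matrix.diagonal d * leftProd n (fun ℓ => (A' ℓ).map (fun x => |x|)) k) i' j''|) ^ 2 := by
  classical
  set P := leftProd n (fun ℓ => (A' ℓ).map (fun x => |x|)) k with hP
  have hPnn : ∀ i j, 0 ≤ P i j :=
    leftProd_nonneg n _ (fun ℓ i j => abs_nonneg _) k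
  have hBrow : ∀ ℓ < k, ∀ t, ∑ j, ((A' ℓ).map (fun x => |x|)) t j = 1 := by
    intro ℓ hℓ t
    simpa [Matrix.map_apply] using hrow ℓ hℓ t
  have hProw : ∀ i, ∑ j, P i j = 1 :=
    leftProd_row_sum n k _ hBrow k le_rfl
  have habs : ∀ (i : Fin (n 0)) (j' : Fin (n k)),
      |(Matrix.diagonal d * P) i j'| = d i * P i j' := by
    intro i j'
    rw [Matrix.diagonal_mul]
    exact abs_of_nonneg (mul_nonneg (hd i) (hPnn i j'))
  have hSsum : (∑ i', ∑ j'', |(Matrix.diagonal d * P) i' j''|) = ∑ i'', d i'' := by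
    simp only [habs]
    refine Finset.sum_congr rfl fun i _ => ?_
    rw [← Finset.mul_sum, hProw i, mul_one]
  have hS0 : (∑ i'', d i'') ≠ 0 := ne_of_gt hSum
  have hsq : ∀ ω : (ℓ : Fin (k + 1)) → Fin (n ℓ.val),
      (∏ ℓ : Fin k, rwSign (A' ℓ (ω ℓ.castSucc) (ω ℓ.succ))) ^ 2 = 1 := by
    intro ω
    rw [← Finset.prod_pow]
    refine Finset.prod_eq_one fun ℓ _ => ?_
    unfold rwSign
    split <;> norm_num
  have hE2 : ∀ (i : Fin (n 0)) (j' : Fin (n k)),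
      (∑ ω : (ℓ : Fin (k + 1)) → Fin (n ℓ.val),
          pathProb k n A' (fun i' => d i' / ∑ i'', d i'') ω *
            (pathX k n A' d (fun i' => d i' / ∑ i'', d i'') i j' ω) ^ 2)
        = (∑ i'', d i'') * (d i * P i j') := by
    intro i j'
    have hpt : ∀ ω : (ℓ : Fin (k + 1)) → Fin (n ℓ.val),
        pathProb k n A' (fun i' => d i' / ∑ i'', d i'') ω *
          (pathX k n A' d (fun i' => d i' / ∑ i'', d i'') i j' ω) ^ 2
        = (∑ i'', d i'') * (d i *
            ((if i = ω ⟨0, Nat.succ_pos k⟩ ∧ j' = ω ⟨k, Nat.lt_succ_self k⟩ then (1:ℝ) else 0) *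
              ∏ ℓ : Fin k, ((A' ℓ).map (fun x => |x|)) (ω ℓ.castSucc) (ω ℓ.succ))) := by
      intro ω
      unfold pathProb pathX
      by_cases hc : i = ω ⟨0, Nat.succ_pos k⟩ ∧ j' = ω ⟨k, Nat.lt_succ_self k⟩
      · rw [if_pos hc, ← hc.1]
        simp only [Matrix.map_apply]
        by_cases hz : d i = 0
        · simp [hz]
        · have hs : d i / (d i / ∑ i'', d i'') = ∑ i'', d i'' := by
            rw [div_div_eq_mul_div, mul_comm, mul_div_assoc, div_self hz, mul_one]
          rw [mul_one, mul_pow, hs, hsq ω, mul_one, one_mul]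
          field_simp
      · rw [if_neg hc]
        simp
    have hps := pathSum_eq n (fun ℓ => (A' ℓ).map (fun x => |x|)) k i j'
    rw [Finset.sum_congr rfl fun ω _ => hpt ω, ← Finset.mul_sum, ← Finset.mul_sum,
      hps, ← hP]
  have hvar : ∀ (i : Fin (n 0)) (j' : Fin (n k)),
      (∑ ω : (ℓ : Fin (k + 1)) → Fin (n ℓ.val),
          pathProb k n A' (fun i' => d i' / ∑ i'', d i'') ω *
            (pathX k n A' d (fun i' => d i' / ∑ i'', d i'') i j' ω) ^ 2) -
        (∑ ω : (ℓ : Fin (k + 1)) → Fin (n ℓ.val),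
            pathProb k n A' (fun i' => d i' / ∑ i'', d i'') ω *
              pathX k n A' d (fun i' => d i' / ∑ i'', d i'') i j' ω) ^ 2
        ≤ (∑ i'', d i'') * (d i * P i j') := by
    intro i j'
    exact (sub_le_self _ (sq_nonneg _)).trans_eq (hE2 i j')
  constructor
  · intro i j'
    refine (hvar i j').trans ?_
    rw [← habs i j', ← hSsum]
    rw [mul_comm]
    refine mul_le_mul_of_nonneg_right ?_ ?_
    · exact le_trans
        (le_ciSup (f := fun j'' => |(Matrix.diagonal d * P) i j''|)
          (Set.Finite.bddAbove (Set.finite_range _)) j')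
        (le_ciSup (f := fun i' => ⨆ j'', |(Matrix.diagonal d * P) i' j''|)
          (Set.Finite.bddAbove (Set.finite_range _)) i)
    · exact Finset.sum_nonneg fun _ _ => Finset.sum_nonneg fun _ _ => abs_nonneg _
  · refine le_trans (Finset.sum_le_sum fun i _ =>
      Finset.sum_le_sum fun j' _ => hvar i j') ?_
    have : (∑ i : Fin (n 0), ∑ j' : Fin (n k), (∑ i'', d i'') * (d i * P i j'))
        = (∑ i'', d i'') * (∑ i'', d i'') := by
      rw [Finset.mul_sum]
      refine Finset.sum_congr rfl fun i _ => ?_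
      rw [← Finset.mul_sum, ← Finset.mul_sum, hProw i, mul_one]
    rw [this, hSsum]
    ring_nf
    exact le_refl _
end

section
/- For the tug-of-war (Rademacher) sketch s with i.i.d. uniform ±1 entries, the matrix-valued random variable A s sᵀ B (A ∈ ℝ^{m×n}, B ∈ ℝ^{n×p}) has Tr[Σ] = ‖A‖_F²·‖B‖_F² + ‖AB‖_F² − 2·Σ_{k=1}^n ‖A_{•k}‖₂²·‖B_{k•}‖₂², where A_{•k} is the k-th column of A and B_{k•} the k-th row of B. -/
open scoped BigOperators

/-- The sign vector determined by ω ∈ {0,1}ⁿ. -/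
noncomputable def radSign {n : ℕ} (ω : Fin n → Bool) (t : Fin n) : ℝ :=
  if ω t then 1 else -1

/-- Expectation over the uniform distribution on {0,1}ⁿ. -/
noncomputable def radE {n : ℕ} (f : (Fin n → Bool) → ℝ) : ℝ :=
  ∑ ω : Fin n → Bool, ((1 : ℝ) / 2) ^ n * f ω

/-- The (i,j) entry of A s sᵀ B for the sign vector s = radSign ω. -/
noncomputable def sketchEntry {m n p : ℕ} (A : Matrix (Fin m) (Fin n) ℝ)
    (B : Matrix (Fin n) (Fin p) ℝ) (ω : Fin n → Bool) (i : Fin m) (j : Fin p) : ℝ :=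
  ∑ k, ∑ l, A i k * radSign ω k * radSign ω l * B l j

lemma radE_factor {n : ℕ} (g : Fin n → Bool → ℝ) :
    radE (fun ω => ∏ t, g t (ω t)) = ∏ t, ((g t true + g t false) / 2) := by
  unfold radE
  have h : ∀ ω : Fin n → Bool, ((1:ℝ)/2) ^ n * ∏ t, g t (ω t)
      = ∏ t, ((1/2) * g t (ω t)) := by
    intro ω
    rw [Finset.prod_mul_distrib, Finset.prod_const]
    simp [Finset.card_univ]
  simp_rw [h]
  rw [← Fintype.prod_sum (fun t b => (1/2 : ℝ) * g t b)]
  congr 1; funext t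
  simp [Fintype.sum_bool]; ring

lemma radE_prod_pow {n : ℕ} (e : Fin n → ℕ) :
    radE (fun ω => ∏ t, radSign ω t ^ e t)
      = if ∀ t, Even (e t) then 1 else 0 := by
  have := radE_factor (fun t b => ((if b then (1:ℝ) else -1)) ^ e t)
  simp only [radSign] at *
  rw [this]
  simp only [if_true, Bool.false_eq_true, if_false, one_pow]
  have h : ∀ t : Fin n, ((1 + (-1:ℝ) ^ e t) / 2)
      = if Even (e t) then 1 else 0 := by
    intro t
    by_cases h : Even (e t)
    · rw [if_pos h, h.neg_one_pow]; norm_num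
    · rw [if_neg h, Odd.neg_one_pow (Nat.not_even_iff_odd.mp h)]; norm_num
  simp_rw [h]
  by_cases H : ∀ t : Fin n, Even (e t)
  · rw [if_pos H]; exact Finset.prod_eq_one (fun t _ => if_pos (H t))
  · rw [if_neg H]
    push_neg at H
    obtain ⟨t, ht⟩ := H
    exact Finset.prod_eq_zero (Finset.mem_univ t) (if_neg ht)

lemma radE_sum {n : ℕ} {ι : Type*} (S : Finset ι) (f : ι → (Fin n → Bool) → ℝ) :
    radE (fun ω => ∑ x ∈ S, f x ω) = ∑ x ∈ S, radE (f x) := by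
  unfold radE
  simp_rw [Finset.mul_sum]
  exact Finset.sum_comm

lemma radE_const_mul {n : ℕ} (c : ℝ) (f : (Fin n → Bool) → ℝ) :
    radE (fun ω => c * f ω) = c * radE f := by
  unfold radE
  rw [Finset.mul_sum]
  congr 1; funext ω; ring

lemma sign_eq_prod {n : ℕ} (ω : Fin n → Bool) (k : Fin n) :
    radSign ω k = ∏ t, radSign ω t ^ (if t = k then 1 else 0) := by
  have : ∀ t : Fin n, radSign ω t ^ (if t = k then 1 else 0)
      = if t = k then radSign ω t else 1 := by
    intro t; split_ifs <;> simp
  simp_rw [this]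
  rw [Finset.prod_ite_eq' Finset.univ k (fun t => radSign ω t)]
  simp

lemma forall_even_iff {n : ℕ} (k l k' l' : Fin n) :
    (∀ t : Fin n, Even ((if t = k then 1 else 0) + (if t = l then 1 else 0)
        + (if t = k' then 1 else 0) + (if t = l' then 1 else 0) : ℕ)) ↔
      ((k = l ∧ k' = l') ∨ (k = k' ∧ l = l') ∨ (k = l' ∧ l = k')) := by
  constructor
  · intro h
    have hk := h k; have hl := h l; have hk' := h k'; have hl' := h l'
    simp only [Nat.even_iff] at hk hl hk' hl'
    by_cases h1 : k = l <;> by_cases h2 : k = k' <;> by_cases h3 : k = l' <;>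
      by_cases h4 : l = l' <;> by_cases h5 : l = k' <;> by_cases h6 : k' = l' <;>
      simp_all <;> omega
  · rintro (⟨rfl, rfl⟩ | ⟨rfl, rfl⟩ | ⟨rfl, rfl⟩) t <;> split_ifs <;> simp_all <;> decide

lemma radE_four {n : ℕ} (k l k' l' : Fin n) :
    radE (fun ω => radSign ω k * radSign ω l * radSign ω k' * radSign ω l') =
      (if k = l then (1:ℝ) else 0) * (if k' = l' then 1 else 0)
        + (if k = k' then 1 else 0) * (if l = l' then 1 else 0)
        + (if k = l' then 1 else 0) * (if l = k' then 1 else 0)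
        - 2 * ((if k = l then 1 else 0) * (if k = k' then 1 else 0) * (if k = l' then 1 else 0)) := by
  have key : (fun ω : Fin n → Bool => radSign ω k * radSign ω l * radSign ω k' * radSign ω l')
      = fun ω => ∏ t, radSign ω t ^ ((if t = k then 1 else 0) + (if t = l then 1 else 0)
          + (if t = k' then 1 else 0) + (if t = l' then 1 else 0)) := by
    funext ω
    simp_rw [pow_add, Finset.prod_mul_distrib, ← sign_eq_prod]
  rw [key, radE_prod_pow]
  rw [if_congr (forall_even_iff k l k' l') rfl rfl]
  by_cases h1 : k = l <;> by_cases h2 : k = k' <;> by_cases h3 : k = l' <;>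
    by_cases h4 : l = l' <;> by_cases h5 : l = k' <;> by_cases h6 : k' = l' <;>
    simp_all <;> norm_num

lemma radE_two {n : ℕ} (k l : Fin n) :
    radE (fun ω => radSign ω k * radSign ω l) = if k = l then (1:ℝ) else 0 := by
  have key : (fun ω : Fin n → Bool => radSign ω k * radSign ω l)
      = fun ω => ∏ t, radSign ω t ^ ((if t = k then 1 else 0) + (if t = l then 1 else 0)) := by
    funext ω
    simp_rw [pow_add, Finset.prod_mul_distrib, ← sign_eq_prod]
  rw [key, radE_prod_pow]
  have : (∀ t : Fin n, Even ((if t = k then 1 else 0) + (if t = l then 1 else 0) : ℕ)) ↔ k = l := by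
    constructor
    · intro h
      have hk := h k
      by_cases h1 : k = l
      · exact h1
      · simp [h1, Nat.even_iff] at hk
    · rintro rfl t; split_ifs <;> decide
  rw [if_congr this rfl rfl]

lemma rad_mean {n : ℕ} (a b : Fin n → ℝ) :
    radE (fun ω => ∑ k, ∑ l, a k * radSign ω k * radSign ω l * b l)
      = ∑ k, a k * b k := by
  have h : ∀ ω : Fin n → Bool, (∑ k, ∑ l, a k * radSign ω k * radSign ω l * b l)
      = ∑ k, ∑ l, (a k * b l) * (radSign ω k * radSign ω l) := by
    intro ω
    refine Finset.sum_congr rfl fun k _ => Finset.sum_congr rfl fun l _ => by ring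
  simp_rw [h, radE_sum, radE_const_mul, radE_two]
  simp [Finset.sum_ite_eq]

lemma rad_second {n : ℕ} (a b : Fin n → ℝ) :
    radE (fun ω => (∑ k, ∑ l, a k * radSign ω k * radSign ω l * b l) ^ 2)
      = (∑ k, a k ^ 2) * (∑ l, b l ^ 2) + 2 * (∑ k, a k * b k) ^ 2
          - 2 * ∑ k, a k ^ 2 * b k ^ 2 := by
  have h : ∀ ω : Fin n → Bool, (∑ k, ∑ l, a k * radSign ω k * radSign ω l * b l) ^ 2
      = ∑ k, ∑ k', ∑ l, ∑ l', (a k * b l * (a k' * b l')) *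
          (radSign ω k * radSign ω l * radSign ω k' * radSign ω l') := by
    intro ω
    rw [sq, Finset.sum_mul_sum]
    refine Finset.sum_congr rfl fun k _ => Finset.sum_congr rfl fun k' _ => ?_
    rw [Finset.sum_mul_sum]
    refine Finset.sum_congr rfl fun l _ => Finset.sum_congr rfl fun l' _ => by ring
  simp_rw [h, radE_sum, radE_const_mul, radE_four]
  have pull : ∀ (P : Prop) [Decidable P] (f : Fin n → ℝ),
      (∑ x : Fin n, if P then f x else 0) = if P then ∑ x : Fin n, f x else 0 := by
    intro P _ f; split_ifs <;> simp
  simp only [mul_add, mul_sub, Finset.sum_add_distrib, Finset.sum_sub_distrib]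
  simp only [mul_ite, ite_mul, mul_one, mul_zero, one_mul, zero_mul, pull,
    Finset.sum_ite_eq, Finset.sum_ite_eq', Finset.mem_univ, if_true,
    Finset.sum_const_zero, add_zero, zero_add]
  have e1 : ∑ x : Fin n, ∑ x1 : Fin n, a x * b x * (a x1 * b x1) = (∑ k, a k * b k) ^ 2 := by
    rw [sq, Finset.sum_mul_sum]
  have e2 : ∑ x : Fin n, ∑ x1 : Fin n, a x * b x1 * (a x * b x1)
      = (∑ k, a k ^ 2) * (∑ l, b l ^ 2) := by
    rw [Finset.sum_mul_sum]
    exact Finset.sum_congr rfl fun x _ => Finset.sum_congr rfl fun y _ => by ring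
  have e3 : ∑ x : Fin n, ∑ x1 : Fin n, a x * b x1 * (a x1 * b x) = (∑ k, a k * b k) ^ 2 := by
    rw [sq, Finset.sum_mul_sum]
    exact Finset.sum_congr rfl fun x _ => Finset.sum_congr rfl fun y _ => by ring
  have e4 : ∑ x : Fin n, a x * b x * (a x * b x) * 2 = 2 * ∑ k, a k ^ 2 * b k ^ 2 := by
    rw [Finset.mul_sum]
    exact Finset.sum_congr rfl fun x _ => by ring
  rw [e1, e2, e3, e4]; ring

/-- Tug-of-war sketch: Tr[Σ] = ‖A‖_F²‖B‖_F² + ‖AB‖_F² − 2 Σ_k ‖A_{•k}‖₂²‖B_{k•}‖₂². -/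
theorem tug_of_war_trace_covariance {m n p : ℕ}
    (A : Matrix (Fin m) (Fin n) ℝ) (B : Matrix (Fin n) (Fin p) ℝ) :
    (∑ i, ∑ j,
        (radE (fun ω => (sketchEntry A B ω i j) ^ 2) -
          (radE (fun ω => sketchEntry A B ω i j)) ^ 2)) =
      (∑ i, ∑ k, (A i k) ^ 2) * (∑ k, ∑ j, (B k j) ^ 2) +
        (∑ i, ∑ j, ((A * B) i j) ^ 2) -
        2 * ∑ k, (∑ i, (A i k) ^ 2) * (∑ j, (B k j) ^ 2) := by
  have key : ∀ (i : Fin m) (j : Fin p),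
      radE (fun ω => (sketchEntry A B ω i j) ^ 2)
          - (radE (fun ω => sketchEntry A B ω i j)) ^ 2
        = (∑ k, (A i k) ^ 2) * (∑ l, (B l j) ^ 2) + (∑ k, A i k * B k j) ^ 2
            - 2 * ∑ k, (A i k) ^ 2 * (B k j) ^ 2 := by
    intro i j
    have hm := rad_mean (fun k => A i k) (fun l => B l j)
    have hs := rad_second (fun k => A i k) (fun l => B l j)
    simp only [sketchEntry]
    rw [hs, hm]
    ring
  simp_rw [key, Matrix.mul_apply]
  have t1 : ∑ i, ∑ j, (∑ k, (A i k) ^ 2) * (∑ l, (B l j) ^ 2)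
      = (∑ i, ∑ k, (A i k) ^ 2) * (∑ k, ∑ j, (B k j) ^ 2) := by
    rw [← Finset.sum_mul_sum]
    congr 1
    exact Finset.sum_comm
  have t3 : ∑ i, ∑ j, ∑ k, (A i k) ^ 2 * (B k j) ^ 2
      = ∑ k, (∑ i, (A i k) ^ 2) * (∑ j, (B k j) ^ 2) := by
    have h1 : ∀ i : Fin m, ∑ j, ∑ k, (A i k) ^ 2 * (B k j) ^ 2
        = ∑ k, ∑ j, (A i k) ^ 2 * (B k j) ^ 2 := fun i => Finset.sum_comm
    simp_rw [h1]
    rw [Finset.sum_comm]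
    exact Finset.sum_congr rfl fun k _ => (Finset.sum_mul_sum _ _ _ _).symm
  simp only [Finset.sum_add_distrib, Finset.sum_sub_distrib, t1]
  simp_rw [← Finset.mul_sum]
  rw [t3]
end

section
/- For the column-sample sketch with probabilities p_k proportional to ‖A_{•k}‖₂·‖B_{k•}‖₂ (assuming all these products are nonzero), Tr[Σ] = (Σ_k ‖A_{•k}‖₂·‖B_{k•}‖₂)² − ‖AB‖_F², and in particular Tr[Σ] ≤ ‖A‖_F²·‖B‖_F² − ‖AB‖_F². -/
open scoped BigOperators

/-- The column-sample sketch vector: s = e_k/√(p_k) with probability p_k. -/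
noncomputable def colSketch {n : ℕ} (p : Fin n → ℝ) (ωk : Fin n) (i : Fin n) : ℝ :=
  if i = ωk then 1 / Real.sqrt (p ωk) else 0

/-- The (i,j) entry of A s sᵀ B for the column-sample sketch. -/
noncomputable def colSketchEntry {m n q : ℕ} (p : Fin n → ℝ)
    (A : Matrix (Fin m) (Fin n) ℝ) (B : Matrix (Fin n) (Fin q) ℝ)
    (ωk : Fin n) (i : Fin m) (j : Fin q) : ℝ :=
  ∑ k, ∑ l, A i k * colSketch p ωk k * colSketch p ωk l * B l j

/-- Column-sample sketch with p_k ∝ ‖A_{•k}‖₂‖B_{k•}‖₂: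
    Tr[Σ] = (Σ_k ‖A_{•k}‖₂‖B_{k•}‖₂)² − ‖AB‖_F² ≤ ‖A‖_F²‖B‖_F² − ‖AB‖_F². -/
theorem column_sample_optimal_trace_covariance {m n q : ℕ}
    (A : Matrix (Fin m) (Fin n) ℝ) (B : Matrix (Fin n) (Fin q) ℝ)
    (w : Fin n → ℝ)
    (hw : ∀ k, w k = Real.sqrt (∑ i, (A i k) ^ 2) * Real.sqrt (∑ j, (B k j) ^ 2))
    (hw0 : ∀ k, w k ≠ 0)
    (p : Fin n → ℝ) (hp : ∀ k, p k = w k / ∑ l, w l) :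
    (∑ i, ∑ j,
        ((∑ ω, p ω * (colSketchEntry p A B ω i j) ^ 2) -
          (∑ ω, p ω * colSketchEntry p A B ω i j) ^ 2)) =
      (∑ k, w k) ^ 2 - (∑ i, ∑ j, ((A * B) i j) ^ 2) ∧
    (∑ i, ∑ j,
        ((∑ ω, p ω * (colSketchEntry p A B ω i j) ^ 2) -
          (∑ ω, p ω * colSketchEntry p A B ω i j) ^ 2)) ≤
      (∑ i, ∑ k, (A i k) ^ 2) * (∑ k, ∑ j, (B k j) ^ 2) -
        ∑ i, ∑ j, ((A * B) i j) ^ 2 := by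
  rcases Nat.eq_zero_or_pos n with hn | hn
  · subst hn
    simp [colSketchEntry, Matrix.mul_apply]
  have hwpos : ∀ k, 0 < w k := by
    intro k
    refine lt_of_le_of_ne ?_ (Ne.symm (hw0 k))
    rw [hw]
    positivity
  have hSpos : 0 < ∑ l, w l :=
    Finset.sum_pos (fun l _ => hwpos l) ⟨⟨0, hn⟩, Finset.mem_univ _⟩
  have hppos : ∀ k, 0 < p k := by
    intro k; rw [hp]; exact div_pos (hwpos k) hSpos
  -- entry formula
  have hentry : ∀ ω i j, colSketchEntry p A B ω i j = A i ω * B ω j / p ω := by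
    intro ω i j
    unfold colSketchEntry colSketch
    rw [Finset.sum_eq_single ω]
    · rw [Finset.sum_eq_single ω]
      · simp only [if_pos rfl, if_true]
        have hs : Real.sqrt (p ω) * Real.sqrt (p ω) = p ω := Real.mul_self_sqrt (hppos ω).le
        conv_rhs => rw [← hs]
        ring
      · intro l _ hl; simp [hl]
      · simp
    · intro k _ hk; simp [hk]
    · simp
  -- the mean
  have hmean : ∀ i j, (∑ ω, p ω * colSketchEntry p A B ω i j) = (A * B) i j := by
    intro i j
    rw [Matrix.mul_apply]
    refine Finset.sum_congr rfl fun ω _ => ?_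
    rw [hentry, mul_div_assoc', mul_comm (p ω), mul_div_assoc, div_self (hppos ω).ne',
      mul_one]
  -- second moment
  have hsec : ∀ i j, (∑ ω, p ω * (colSketchEntry p A B ω i j) ^ 2)
      = ∑ ω, (A i ω) ^ 2 * (B ω j) ^ 2 / p ω := by
    intro i j
    refine Finset.sum_congr rfl fun ω _ => ?_
    rw [hentry]
    field_simp [(hppos ω).ne']
  have hwsq : ∀ k, (∑ i, (A i k) ^ 2) * (∑ j, (B k j) ^ 2) = (w k) ^ 2 := by
    intro k
    rw [hw, mul_pow, Real.sq_sqrt (by positivity), Real.sq_sqrt (by positivity)]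
  have key : (∑ i, ∑ j,
        ((∑ ω, p ω * (colSketchEntry p A B ω i j) ^ 2) -
          (∑ ω, p ω * colSketchEntry p A B ω i j) ^ 2)) =
      (∑ k, w k) ^ 2 - (∑ i, ∑ j, ((A * B) i j) ^ 2) := by
    have h1 : (∑ i, ∑ j, ∑ ω, (A i ω) ^ 2 * (B ω j) ^ 2 / p ω) = (∑ k, w k) ^ 2 := by
      rw [Finset.sum_comm]
      have : ∀ j : Fin q, (∑ i, ∑ ω, (A i ω) ^ 2 * (B ω j) ^ 2 / p ω)
          = ∑ ω, ∑ i, (A i ω) ^ 2 * (B ω j) ^ 2 / p ω := fun j => Finset.sum_comm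
      rw [Finset.sum_congr rfl fun j _ => this j, Finset.sum_comm]
      have h2 : ∀ ω, (∑ j, ∑ i, (A i ω) ^ 2 * (B ω j) ^ 2 / p ω)
          = (∑ i, (A i ω) ^ 2) * (∑ j, (B ω j) ^ 2) / p ω := by
        intro ω
        rw [Finset.sum_mul_sum, div_eq_mul_inv, Finset.sum_mul, Finset.sum_comm]
        refine Finset.sum_congr rfl fun j _ => ?_
        rw [Finset.sum_mul]
        refine Finset.sum_congr rfl fun i _ => ?_
        rw [div_eq_mul_inv]
      rw [Finset.sum_congr rfl fun ω _ => h2 ω]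
      have h3 : ∀ ω : Fin n, (∑ i, (A i ω) ^ 2) * (∑ j, (B ω j) ^ 2) / p ω
          = w ω * (∑ l, w l) := by
        intro ω
        rw [hwsq, hp]
        field_simp [(hwpos ω).ne', hSpos.ne']
      rw [Finset.sum_congr rfl fun ω _ => h3 ω, ← Finset.sum_mul, sq]
    calc (∑ i, ∑ j,
        ((∑ ω, p ω * (colSketchEntry p A B ω i j) ^ 2) -
          (∑ ω, p ω * colSketchEntry p A B ω i j) ^ 2))
        = (∑ i, ∑ j, ∑ ω, (A i ω) ^ 2 * (B ω j) ^ 2 / p ω)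
            - (∑ i, ∑ j, ((A * B) i j) ^ 2) := by
          rw [← Finset.sum_sub_distrib]
          refine Finset.sum_congr rfl fun i _ => ?_
          rw [← Finset.sum_sub_distrib]
          exact Finset.sum_congr rfl fun j _ => by rw [hsec, hmean]
      _ = (∑ k, w k) ^ 2 - (∑ i, ∑ j, ((A * B) i j) ^ 2) := by rw [h1]
  refine ⟨key, ?_⟩
  rw [key]
  gcongr ?_ - _
  -- (∑ w)² ≤ ‖A‖²‖B‖²
  have := Finset.sum_mul_sq_le_sq_mul_sq Finset.univ
    (fun k => Real.sqrt (∑ i, (A i k) ^ 2)) (fun k => Real.sqrt (∑ j, (B k j) ^ 2))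
  calc (∑ k, w k) ^ 2
      = (∑ k, Real.sqrt (∑ i, (A i k) ^ 2) * Real.sqrt (∑ j, (B k j) ^ 2)) ^ 2 := by
        rw [Finset.sum_congr rfl fun k _ => hw k]
    _ ≤ (∑ k, Real.sqrt (∑ i, (A i k) ^ 2) ^ 2) * (∑ k, Real.sqrt (∑ j, (B k j) ^ 2) ^ 2) :=
        this
    _ = (∑ k, ∑ i, (A i k) ^ 2) * (∑ k, ∑ j, (B k j) ^ 2) := by
        rw [Finset.sum_congr rfl fun k _ => Real.sq_sqrt (by positivity : (0:ℝ) ≤ ∑ i, (A i k) ^ 2),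
          Finset.sum_congr rfl fun k _ => Real.sq_sqrt (by positivity : (0:ℝ) ≤ ∑ j, (B k j) ^ 2)]
    _ = (∑ i, ∑ k, (A i k) ^ 2) * (∑ k, ∑ j, (B k j) ^ 2) := by rw [Finset.sum_comm]
end

section
/- Let A₁,...,A_k be matrices with A_ℓ ∈ ℝ^{n_{ℓ-1}×n_ℓ}, and let s⁽¹⁾,...,s⁽ᵏ⁻¹⁾ be independent random vectors each with i.i.d. uniform ±1 entries (s⁽ℓ⁾ ∈ ℝ^{n_ℓ}). Then the matrix-valued random variable (∏_{ℓ=1}^{k-1} A_ℓ s⁽ℓ⁾ (s⁽ℓ⁾)ᵀ) A_k has expectation A₁⋯A_k, and the trace of its covariance satisfies Tr[Σ] ≤ 3^k · ‖A₁‖_F² ⋯ ‖A_k‖_F². -/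
open scoped BigOperators

/-- The sketched product A₀ s⁽⁰⁾(s⁽⁰⁾)ᵀ A₁ s⁽¹⁾(s⁽¹⁾)ᵀ ⋯ A_{k-1}, where the sign
    vectors s⁽ℓ⁾ ∈ ℝ^{n_{ℓ+1}} are determined by ω (no sketch after the last factor). -/
noncomputable def sketchProd (k : ℕ) (n : ℕ → ℕ)
    (A : ∀ ℓ : ℕ, Matrix (Fin (n ℓ)) (Fin (n (ℓ + 1))) ℝ)
    (ω : (ℓ : Fin k) → Fin (n (ℓ.val + 1)) → Bool) :
    ∀ m : ℕ, Matrix (Fin (n 0)) (Fin (n m)) ℝ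
  | 0 => 1
  | (m + 1) =>
      sketchProd k n A ω m * A m *
        (if h : m + 1 < k then
          Matrix.vecMulVec (fun t : Fin (n (m + 1)) => if ω ⟨m, by omega⟩ t then (1 : ℝ) else -1)
            (fun t : Fin (n (m + 1)) => if ω ⟨m, by omega⟩ t then (1 : ℝ) else -1)
        else (1 : Matrix (Fin (n (m + 1))) (Fin (n (m + 1))) ℝ))

namespace MMSketch

open Finset

def sg (v : Bool) : ℝ := if v then 1 else -1

lemma sg_mul_self (v : Bool) : sg v * sg v = 1 := by cases v <;> simp [sg]

lemma sg_not (v : Bool) : sg (!v) = - sg v := by cases v <;> simp [sg]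

lemma card_bool_fun (d : ℕ) : (Fintype.card (Fin d → Bool) : ℝ) = 2 ^ d := by
  simp [Fintype.card_fun]

/-- flip involution kills sums with a single odd coordinate -/
lemma sum_sg_mul {d : ℕ} (i : Fin d) (h : (Fin d → Bool) → ℝ)
    (hh : ∀ b v, h (Function.update b i v) = h b) :
    ∑ b : Fin d → Bool, sg (b i) * h b = 0 := by
  have hinv : Function.Involutive (fun b : Fin d → Bool => Function.update b i (!b i)) := by
    intro b
    funext u
    by_cases hu : u = i
    · subst hu; simp
    · simp [Function.update_of_ne hu]
  set e := Function.Involutive.toPerm _ hinv with he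
  have hsum := Equiv.sum_comp e (fun b : Fin d → Bool => sg (b i) * h b)
  have heq : ∀ b : Fin d → Bool,
      sg ((e b) i) * h (e b) = -(sg (b i) * h b) := by
    intro b
    have h0 : e b = Function.update b i (!b i) := rfl
    rw [h0]
    simp only [Function.update_self, sg_not, hh]
    ring
  rw [Finset.sum_congr rfl (fun b _ => heq b)] at hsum
  rw [Finset.sum_neg_distrib] at hsum
  linarith [hsum]

lemma T2 {d : ℕ} (t j : Fin d) :
    ∑ b : Fin d → Bool, sg (b t) * sg (b j) = if t = j then (2 ^ d : ℝ) else 0 := by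
  by_cases htj : t = j
  · subst htj
    rw [if_pos rfl]
    simp only [sg_mul_self, Finset.sum_const, nsmul_eq_mul, mul_one]
    rw [Finset.card_univ, card_bool_fun]
  · rw [if_neg htj]
    exact sum_sg_mul t (fun b => sg (b j))
      (fun b v => by rw [Function.update_of_ne (Ne.symm htj)])

lemma T4 {d : ℕ} (i k j l : Fin d) :
    ∑ b : Fin d → Bool, sg (b i) * sg (b k) * sg (b j) * sg (b l) =
    (2 ^ d : ℝ) * ((if i = k then 1 else 0) * (if j = l then 1 else 0)
               + (if i = j then 1 else 0) * (if k = l then 1 else 0)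
               + (if i = l then 1 else 0) * (if k = j then 1 else 0)
               - 2 * (if i = k ∧ i = j ∧ i = l then 1 else 0)) := by
  by_cases hik : i = k
  · subst hik
    have hterm : ∀ b ∈ (Finset.univ : Finset (Fin d → Bool)),
        sg (b i) * sg (b i) * sg (b j) * sg (b l) = sg (b j) * sg (b l) := by
      intro b _; cases b i <;> cases b j <;> cases b l <;> norm_num [sg]
    rw [Finset.sum_congr rfl hterm, T2 j l]
    clear hterm
    split_ifs <;> first | ring1 | (exfalso; subst_vars; simp_all)
  · by_cases hjl : j = l
    · subst hjl
      have hterm : ∀ b ∈ (Finset.univ : Finset (Fin d → Bool)),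
          sg (b i) * sg (b k) * sg (b j) * sg (b j) = sg (b i) * sg (b k) := by
        intro b _; cases b i <;> cases b k <;> cases b j <;> norm_num [sg]
      rw [Finset.sum_congr rfl hterm, T2 i k]
      clear hterm
      split_ifs <;> first | ring1 | (exfalso; subst_vars; simp_all)
    · by_cases hij : i = j
      · subst hij
        have hterm : ∀ b ∈ (Finset.univ : Finset (Fin d → Bool)),
            sg (b i) * sg (b k) * sg (b i) * sg (b l) = sg (b k) * sg (b l) := by
          intro b _; cases b i <;> cases b k <;> cases b l <;> norm_num [sg]
        rw [Finset.sum_congr rfl hterm, T2 k l]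
        clear hterm
        split_ifs <;> first | ring1 | (exfalso; subst_vars; simp_all)
      · by_cases hil : i = l
        · subst hil
          have hterm : ∀ b ∈ (Finset.univ : Finset (Fin d → Bool)),
              sg (b i) * sg (b k) * sg (b j) * sg (b i) = sg (b k) * sg (b j) := by
            intro b _; cases b i <;> cases b k <;> cases b j <;> norm_num [sg]
          rw [Finset.sum_congr rfl hterm, T2 k j]
          clear hterm
          split_ifs <;> first | ring1 | (exfalso; subst_vars; simp_all)
        · have hterm : ∀ b ∈ (Finset.univ : Finset (Fin d → Bool)),
              sg (b i) * sg (b k) * sg (b j) * sg (b l)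
                = sg (b i) * (sg (b k) * sg (b j) * sg (b l)) := by
            intro b _; ring
          rw [Finset.sum_congr rfl hterm,
            sum_sg_mul i (fun b => sg (b k) * sg (b j) * sg (b l)) (by
              intro b v
              rw [Function.update_of_ne (Ne.symm hik), Function.update_of_ne (Ne.symm hij),
                Function.update_of_ne (Ne.symm hil)])]
          clear hterm
          split_ifs <;> first | ring1 | (exfalso; subst_vars; simp_all)

lemma entry_formula {n0 d e : ℕ} (X : Matrix (Fin n0) (Fin d) ℝ)
    (B : Matrix (Fin d) (Fin e) ℝ) (s : Fin d → ℝ) (p : Fin n0) (q : Fin e) :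
    (X * Matrix.vecMulVec s s * B) p q
      = (∑ i, X p i * s i) * (∑ j, s j * B j q) := by
  simp only [Matrix.mul_apply, Matrix.vecMulVec_apply]
  rw [Finset.sum_mul_sum]
  rw [Finset.sum_comm]
  refine Finset.sum_congr rfl fun t _ => ?_
  rw [Finset.sum_mul]
  refine Finset.sum_congr rfl fun i _ => by ring

lemma sq_expand {n0 d : ℕ} (X : Matrix (Fin n0) (Fin d) ℝ) (b : Fin d → Bool) :
    ∑ p, (∑ i, X p i * sg (b i)) ^ 2
      = ∑ i, ∑ k, (∑ p, X p i * X p k) * (sg (b i) * sg (b k)) := by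
  calc ∑ p, (∑ i, X p i * sg (b i)) ^ 2
      = ∑ p, ∑ i, ∑ k, (X p i * sg (b i)) * (X p k * sg (b k)) := by
        refine Finset.sum_congr rfl fun p _ => ?_
        rw [sq, Finset.sum_mul_sum]
    _ = ∑ i, ∑ p, ∑ k, (X p i * sg (b i)) * (X p k * sg (b k)) := Finset.sum_comm
    _ = ∑ i, ∑ k, ∑ p, (X p i * sg (b i)) * (X p k * sg (b k)) := by
        exact Finset.sum_congr rfl fun i _ => Finset.sum_comm
    _ = ∑ i, ∑ k, (∑ p, X p i * X p k) * (sg (b i) * sg (b k)) := by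
        refine Finset.sum_congr rfl fun i _ => Finset.sum_congr rfl fun k _ => ?_
        rw [Finset.sum_mul]
        exact Finset.sum_congr rfl fun p _ => by ring

lemma sum_if_pull {α : Type*} [Fintype α] (P : Prop) [Decidable P] (f : α → ℝ) :
    (∑ x : α, if P then f x else 0) = if P then ∑ x : α, f x else 0 := by
  split_ifs <;> simp

lemma delta_reduce {d : ℕ} (M N : Fin d → Fin d → ℝ) :
    ∑ i, ∑ j, ∑ k, ∑ l, (M i k * N j l)
          * ((2 ^ d : ℝ) * ((if i = k then 1 else 0) * (if j = l then 1 else 0)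
               + (if i = j then 1 else 0) * (if k = l then 1 else 0)
               + (if i = l then 1 else 0) * (if k = j then 1 else 0)
               - 2 * (if i = k ∧ i = j ∧ i = l then 1 else 0)))
    = (2 ^ d : ℝ) * ((∑ i, M i i) * (∑ j, N j j)
          + ∑ i, ∑ k, M i k * N i k + ∑ i, ∑ k, M i k * N k i
          - 2 * ∑ i, M i i * N i i) := by
  simp only [mul_add, mul_sub, mul_ite, ite_mul, mul_one, mul_zero, zero_mul, mul_neg,
    ite_and, Finset.sum_add_distrib, Finset.sum_sub_distrib, sum_if_pull,
    Finset.sum_ite_eq, Finset.sum_ite_eq', Finset.mem_univ, if_true]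
  simp only [← Finset.sum_mul]
  rw [Finset.sum_mul_sum univ univ (fun i => M i i) (fun j => N j j)]
  ring

lemma sum4_swap {α β γ δ : Type*} [Fintype α] [Fintype β] [Fintype γ] [Fintype δ]
    (f : α → β → γ → δ → ℝ) :
    ∑ a, ∑ b, ∑ c, ∑ e, f a b c e = ∑ c, ∑ e, ∑ a, ∑ b, f a b c e := by
  have e1 : ∑ x : α × β, ∑ y : γ × δ, f x.1 x.2 y.1 y.2 = ∑ a, ∑ b, ∑ c, ∑ e, f a b c e := by
    simp only [Fintype.sum_prod_type]
  have e2 : ∑ y : γ × δ, ∑ x : α × β, f x.1 x.2 y.1 y.2 = ∑ c, ∑ e, ∑ a, ∑ b, f a b c e := by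
    simp only [Fintype.sum_prod_type]
  rw [← e1, Finset.sum_comm, e2]

lemma key_ineq {n0 d e : ℕ} (X : Matrix (Fin n0) (Fin d) ℝ) (B : Matrix (Fin d) (Fin e) ℝ) :
    ∑ b : Fin d → Bool, ∑ p, ∑ q,
        ((X * Matrix.vecMulVec (fun t => sg (b t)) (fun t => sg (b t)) * B) p q) ^ 2
      ≤ 3 * 2 ^ d * ((∑ p, ∑ i, (X p i) ^ 2) * (∑ i, ∑ q, (B i q) ^ 2)) := by
  set M : Fin d → Fin d → ℝ := fun i k => ∑ p, X p i * X p k with hM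
  set N : Fin d → Fin d → ℝ := fun j l => ∑ q, B j q * B l q with hN
  have step1 : ∀ b : Fin d → Bool, ∑ p, ∑ q,
      ((X * Matrix.vecMulVec (fun t => sg (b t)) (fun t => sg (b t)) * B) p q) ^ 2
      = (∑ i, ∑ k, M i k * (sg (b i) * sg (b k)))
        * (∑ j, ∑ l, N j l * (sg (b j) * sg (b l))) := by
    intro b
    have e1 : ∑ p, ∑ q,
        ((X * Matrix.vecMulVec (fun t => sg (b t)) (fun t => sg (b t)) * B) p q) ^ 2
        = (∑ p, (∑ i, X p i * sg (b i)) ^ 2) * (∑ q, (∑ j, B.transpose q j * sg (b j)) ^ 2) := by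
      rw [Finset.sum_mul_sum]
      refine Finset.sum_congr rfl fun p _ => Finset.sum_congr rfl fun q _ => ?_
      rw [entry_formula]
      rw [mul_pow]
      congr 1
      congr 1
      exact Finset.sum_congr rfl fun j _ => by simp [Matrix.transpose_apply]; ring
    rw [e1, sq_expand X b, sq_expand B.transpose b]
    congr 1
  have main : ∑ b : Fin d → Bool, ∑ p, ∑ q,
        ((X * Matrix.vecMulVec (fun t => sg (b t)) (fun t => sg (b t)) * B) p q) ^ 2
      = (2 ^ d : ℝ) * ((∑ i, M i i) * (∑ j, N j j)
          + ∑ i, ∑ k, M i k * N i k + ∑ i, ∑ k, M i k * N k i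
          - 2 * ∑ i, M i i * N i i) := by
    calc ∑ b : Fin d → Bool, ∑ p, ∑ q,
          ((X * Matrix.vecMulVec (fun t => sg (b t)) (fun t => sg (b t)) * B) p q) ^ 2
        = ∑ b : Fin d → Bool, ∑ i, ∑ j, ∑ k, ∑ l,
            (M i k * N j l) * (sg (b i) * sg (b k) * sg (b j) * sg (b l)) := by
          refine Finset.sum_congr rfl fun b _ => ?_
          rw [step1 b, Finset.sum_mul_sum]
          refine Finset.sum_congr rfl fun i _ => ?_
          refine Finset.sum_congr rfl fun j _ => ?_
          rw [Finset.sum_mul_sum]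
          refine Finset.sum_congr rfl fun k _ => Finset.sum_congr rfl fun l _ => by ring
      _ = ∑ i, ∑ j, ∑ k, ∑ l, (M i k * N j l)
            * ∑ b : Fin d → Bool, sg (b i) * sg (b k) * sg (b j) * sg (b l) := by
          rw [Finset.sum_comm]
          refine Finset.sum_congr rfl fun i _ => ?_
          rw [Finset.sum_comm]
          refine Finset.sum_congr rfl fun j _ => ?_
          rw [Finset.sum_comm]
          refine Finset.sum_congr rfl fun k _ => ?_
          rw [Finset.sum_comm]
          refine Finset.sum_congr rfl fun l _ => ?_
          exact (Finset.mul_sum _ _ _).symm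
      _ = ∑ i, ∑ j, ∑ k, ∑ l, (M i k * N j l)
            * ((2 ^ d : ℝ) * ((if i = k then 1 else 0) * (if j = l then 1 else 0)
                 + (if i = j then 1 else 0) * (if k = l then 1 else 0)
                 + (if i = l then 1 else 0) * (if k = j then 1 else 0)
                 - 2 * (if i = k ∧ i = j ∧ i = l then 1 else 0))) := by
          refine Finset.sum_congr rfl fun i _ => Finset.sum_congr rfl fun j _ =>
            Finset.sum_congr rfl fun k _ => Finset.sum_congr rfl fun l _ => ?_
          rw [T4]
      _ = (2 ^ d : ℝ) * ((∑ i, M i i) * (∑ j, N j j)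
            + ∑ i, ∑ k, M i k * N i k + ∑ i, ∑ k, M i k * N k i
            - 2 * ∑ i, M i i * N i i) := delta_reduce M N
  rw [main]
  have hTrM : ∑ i, M i i = ∑ p, ∑ i, (X p i) ^ 2 := by
    rw [Finset.sum_comm]
    exact Finset.sum_congr rfl fun p _ => Finset.sum_congr rfl fun i _ => (sq (X p i)).symm
  have hTrN : ∑ j, N j j = ∑ i, ∑ q, (B i q) ^ 2 :=
    Finset.sum_congr rfl fun j _ => Finset.sum_congr rfl fun q _ => (sq (B j q)).symm
  have hS2 : (∑ i, ∑ k, M i k * N i k) = ∑ p, ∑ q, (∑ i, X p i * B i q) ^ 2 := by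
    calc ∑ i, ∑ k, M i k * N i k
        = ∑ i, ∑ k, ∑ p, ∑ q, (X p i * X p k) * (B i q * B k q) := by
          refine Finset.sum_congr rfl fun i _ => Finset.sum_congr rfl fun k _ => ?_
          rw [Finset.sum_mul_sum]
      _ = ∑ p, ∑ q, ∑ i, ∑ k, (X p i * X p k) * (B i q * B k q) := sum4_swap _
      _ = ∑ p, ∑ q, (∑ i, X p i * B i q) ^ 2 := by
          refine Finset.sum_congr rfl fun p _ => Finset.sum_congr rfl fun q _ => ?_
          rw [sq, Finset.sum_mul_sum]
          exact Finset.sum_congr rfl fun i _ => Finset.sum_congr rfl fun k _ => by ring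
  have hS3 : (∑ i, ∑ k, M i k * N k i) = ∑ i, ∑ k, M i k * N i k := by
    refine Finset.sum_congr rfl fun i _ => Finset.sum_congr rfl fun k _ => ?_
    have : N k i = N i k := Finset.sum_congr rfl fun q _ => by ring
    rw [this]
  have hCS : (∑ p, ∑ q, (∑ i, X p i * B i q) ^ 2)
      ≤ (∑ p, ∑ i, (X p i) ^ 2) * (∑ i, ∑ q, (B i q) ^ 2) := by
    calc ∑ p, ∑ q, (∑ i, X p i * B i q) ^ 2
        ≤ ∑ p, ∑ q, (∑ i, (X p i) ^ 2) * (∑ i, (B i q) ^ 2) := by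
          refine Finset.sum_le_sum fun p _ => Finset.sum_le_sum fun q _ => ?_
          exact Finset.sum_mul_sq_le_sq_mul_sq univ (fun i => X p i) (fun i => B i q)
      _ = (∑ p, ∑ i, (X p i) ^ 2) * (∑ q, ∑ i, (B i q) ^ 2) := by
          rw [← Finset.sum_mul_sum]
      _ = (∑ p, ∑ i, (X p i) ^ 2) * (∑ i, ∑ q, (B i q) ^ 2) := by
          rw [Finset.sum_comm (s := univ) (t := univ) (f := fun q i => (B i q) ^ 2)]
  have hS4 : 0 ≤ ∑ i, M i i * N i i := by
    refine Finset.sum_nonneg fun i _ => mul_nonneg ?_ ?_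
    · exact Finset.sum_nonneg fun p _ => mul_self_nonneg _
    · exact Finset.sum_nonneg fun q _ => mul_self_nonneg _
  have h2d : (0:ℝ) ≤ 2 ^ d := by positivity
  rw [hTrM, hTrN, hS3, hS2]
  have hinner : (∑ p, ∑ i, (X p i) ^ 2) * (∑ i, ∑ q, (B i q) ^ 2)
      + (∑ p, ∑ q, (∑ i, X p i * B i q) ^ 2) + (∑ p, ∑ q, (∑ i, X p i * B i q) ^ 2)
      - 2 * ∑ i, M i i * N i i
      ≤ 3 * ((∑ p, ∑ i, (X p i) ^ 2) * (∑ i, ∑ q, (B i q) ^ 2)) := by linarith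
  calc (2 ^ d : ℝ) * ((∑ p, ∑ i, (X p i) ^ 2) * (∑ i, ∑ q, (B i q) ^ 2)
        + (∑ p, ∑ q, (∑ i, X p i * B i q) ^ 2) + (∑ p, ∑ q, (∑ i, X p i * B i q) ^ 2)
        - 2 * ∑ i, M i i * N i i)
      ≤ (2 ^ d : ℝ) * (3 * ((∑ p, ∑ i, (X p i) ^ 2) * (∑ i, ∑ q, (B i q) ^ 2))) :=
        mul_le_mul_of_nonneg_left hinner h2d
    _ = 3 * 2 ^ d * ((∑ p, ∑ i, (X p i) ^ 2) * (∑ i, ∑ q, (B i q) ^ 2)) := by ring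

lemma cond_exp {k : ℕ} {τ : Fin k → Type} [∀ ℓ, Fintype (τ ℓ)] (m : Fin k)
    (K : (∀ ℓ, τ ℓ) → τ m → ℝ)
    (hK : ∀ ω c b, K (Function.update ω m c) b = K ω b) :
    ∑ ω, ∑ b, K ω b = (Fintype.card (τ m) : ℝ) * ∑ ω, K ω (ω m) := by
  have h1 : ∑ ω, ∑ b, K ω b = ∑ p : (∀ ℓ, τ ℓ) × τ m, K (Function.update p.1 m p.2) p.2 := by
    rw [Fintype.sum_prod_type]
    exact Finset.sum_congr rfl fun ω _ => Finset.sum_congr rfl fun b _ => (hK ω b b).symm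
  have hinv : Function.Involutive
      (fun p : (∀ ℓ, τ ℓ) × τ m => (Function.update p.1 m p.2, p.1 m)) := by
    intro p
    simp [Function.update_idem, Function.update_eq_self]
  have h2 : ∑ p : (∀ ℓ, τ ℓ) × τ m, K (Function.update p.1 m p.2) p.2
      = ∑ p : (∀ ℓ, τ ℓ) × τ m, K p.1 (p.1 m) := by
    have := Equiv.sum_comp (Function.Involutive.toPerm _ hinv)
      (fun p : (∀ ℓ, τ ℓ) × τ m => K (Function.update p.1 m p.2) p.2)
    rw [← this]
    refine Finset.sum_congr rfl fun p _ => ?_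
    show K (Function.update (Function.update p.1 m p.2) m (p.1 m)) (p.1 m) = K p.1 (p.1 m)
    rw [Function.update_idem, Function.update_eq_self]
  rw [h1, h2, Fintype.sum_prod_type]
  simp only [Finset.sum_const, nsmul_eq_mul, card_univ]
  rw [Finset.mul_sum]

lemma sketchProd_congr (k : ℕ) (n : ℕ → ℕ)
    (A : ∀ ℓ : ℕ, Matrix (Fin (n ℓ)) (Fin (n (ℓ + 1))) ℝ)
    (ω ω' : (ℓ : Fin k) → Fin (ℓ.val + 1 |> n) → Bool) (m : ℕ)
    (h : ∀ ℓ : Fin k, (ℓ : ℕ) < m → ω ℓ = ω' ℓ) :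
    sketchProd k n A ω m = sketchProd k n A ω' m := by
  induction m with
  | zero => rfl
  | succ m ih =>
      rw [sketchProd, sketchProd]
      rw [ih (fun ℓ hℓ => h ℓ (by omega))]
      congr 1
      by_cases hm : m + 1 < k
      · rw [dif_pos hm, dif_pos hm, h ⟨m, by omega⟩ (by simp)]
      · rw [dif_neg hm, dif_neg hm]

lemma mean_lemma (k : ℕ) (n : ℕ → ℕ)
    (A : ∀ ℓ : ℕ, Matrix (Fin (n ℓ)) (Fin (n (ℓ + 1))) ℝ) :
    ∀ (m : ℕ), m ≤ k → ∀ (i : Fin (n 0)) (j : Fin (n m)),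
      ∑ ω : (ℓ : Fin k) → Fin (n (ℓ.val + 1)) → Bool, sketchProd k n A ω m i j
        = (Fintype.card ((ℓ : Fin k) → Fin (n (ℓ.val + 1)) → Bool) : ℝ)
            * leftProd n A m i j := by
  intro m
  induction m with
  | zero =>
    intro _ i j
    simp only [sketchProd, leftProd]
    rw [Finset.sum_const, nsmul_eq_mul, Finset.card_univ]
  | succ m ih =>
    intro hm1 i j
    have hmk : m ≤ k := by omega
    -- the tail computation, shared by both cases
    have tail : ∑ ω : (ℓ : Fin k) → Fin (n (ℓ.val + 1)) → Bool,
        (sketchProd k n A ω m * A m) i j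
        = (Fintype.card ((ℓ : Fin k) → Fin (n (ℓ.val + 1)) → Bool) : ℝ)
            * leftProd n A (m + 1) i j := by
      calc ∑ ω : (ℓ : Fin k) → Fin (n (ℓ.val + 1)) → Bool, (sketchProd k n A ω m * A m) i j
          = ∑ ω : (ℓ : Fin k) → Fin (n (ℓ.val + 1)) → Bool,
              ∑ t, sketchProd k n A ω m i t * A m t j := by
            exact Finset.sum_congr rfl fun ω _ => Matrix.mul_apply
        _ = ∑ t, ∑ ω : (ℓ : Fin k) → Fin (n (ℓ.val + 1)) → Bool,
              sketchProd k n A ω m i t * A m t j := Finset.sum_comm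
        _ = ∑ t, ((Fintype.card ((ℓ : Fin k) → Fin (n (ℓ.val + 1)) → Bool) : ℝ)
              * leftProd n A m i t) * A m t j := by
            refine Finset.sum_congr rfl fun t _ => ?_
            rw [← Finset.sum_mul, ih hmk i t]
        _ = (Fintype.card ((ℓ : Fin k) → Fin (n (ℓ.val + 1)) → Bool) : ℝ)
              * leftProd n A (m + 1) i j := by
            show _ = _ * (leftProd n A m * A m) i j
            rw [Matrix.mul_apply, Finset.mul_sum]
            exact Finset.sum_congr rfl fun t _ => by ring
    by_cases hlt : m + 1 < k
    · set mfin : Fin k := ⟨m, by omega⟩ with hmfin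
      set K : ((ℓ : Fin k) → Fin (n (ℓ.val + 1)) → Bool) → (Fin (n (m + 1)) → Bool) → ℝ :=
        fun ω b => ∑ t, (sketchProd k n A ω m * A m) i t * (sg (b t) * sg (b j)) with hKdef
      have hK : ∀ ω c b, K (Function.update ω mfin c) b = K ω b := by
        intro ω c b
        have hdep : sketchProd k n A (Function.update ω mfin c) m = sketchProd k n A ω m := by
          refine sketchProd_congr k n A _ _ m fun ℓ hℓ => ?_
          have hne : ℓ ≠ mfin := by
            rw [hmfin]
            exact Fin.ne_of_val_ne (by simpa using (by omega : (ℓ:ℕ) ≠ m))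
          exact Function.update_of_ne hne _ _
        simp only [hKdef, hdep]
      have hKapp : ∀ ω : (ℓ : Fin k) → Fin (n (ℓ.val + 1)) → Bool,
          sketchProd k n A ω (m + 1) i j = K ω (ω mfin) := by
        intro ω
        rw [sketchProd, dif_pos hlt, Matrix.mul_apply]
        exact Finset.sum_congr rfl fun t _ => rfl
      have hce := cond_exp (τ := fun ℓ : Fin k => Fin (n (ℓ.val + 1)) → Bool) mfin K hK
      have hLHS : ∑ ω : (ℓ : Fin k) → Fin (n (ℓ.val + 1)) → Bool, ∑ b, K ω b
          = (2 ^ (n (m + 1)) : ℝ) * ∑ ω : (ℓ : Fin k) → Fin (n (ℓ.val + 1)) → Bool,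
              (sketchProd k n A ω m * A m) i j := by
        rw [Finset.mul_sum]
        refine Finset.sum_congr rfl fun ω _ => ?_
        calc ∑ b, K ω b
            = ∑ t, (sketchProd k n A ω m * A m) i t * ∑ b : Fin (n (m+1)) → Bool,
                sg (b t) * sg (b j) := by
              rw [Finset.sum_comm]
              exact Finset.sum_congr rfl fun t _ => (Finset.mul_sum _ _ _).symm
          _ = ∑ t, (sketchProd k n A ω m * A m) i t
                * (if t = j then (2 ^ (n (m+1)) : ℝ) else 0) := by
              exact Finset.sum_congr rfl fun t _ => by rw [T2]
          _ = (2 ^ (n (m + 1)) : ℝ) * (sketchProd k n A ω m * A m) i j := by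
              simp only [mul_ite, mul_zero]
              rw [Finset.sum_ite_eq' univ j]
              simp [mul_comm]
      have hcard : (Fintype.card (Fin (n (mfin.val + 1)) → Bool) : ℝ) = 2 ^ (n (m + 1)) :=
        card_bool_fun _
      rw [hLHS, hcard] at hce
      have hce2 : (2 ^ (n (m + 1)) : ℝ) * ∑ ω : (ℓ : Fin k) → Fin (n (ℓ.val + 1)) → Bool,
          sketchProd k n A ω (m + 1) i j
          = (2 ^ (n (m + 1)) : ℝ) * ∑ ω : (ℓ : Fin k) → Fin (n (ℓ.val + 1)) → Bool,
              (sketchProd k n A ω m * A m) i j := by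
        rw [Finset.sum_congr rfl fun ω _ => hKapp ω]
        rw [← hce]
      have h2 : (2 ^ (n (m + 1)) : ℝ) ≠ 0 := by positivity
      have := mul_left_cancel₀ h2 hce2
      rw [this, tail]
    · have hone : ∀ ω : (ℓ : Fin k) → Fin (n (ℓ.val + 1)) → Bool,
          sketchProd k n A ω (m + 1) i j = (sketchProd k n A ω m * A m) i j := by
        intro ω
        rw [sketchProd, dif_neg hlt, Matrix.mul_one]
      rw [Finset.sum_congr rfl fun ω _ => hone ω, tail]

lemma var_lemma (k : ℕ) (n : ℕ → ℕ)
    (A : ∀ ℓ : ℕ, Matrix (Fin (n ℓ)) (Fin (n (ℓ + 1))) ℝ) :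
    ∀ (m : ℕ), m + 1 ≤ k →
      ∑ ω : (ℓ : Fin k) → Fin (n (ℓ.val + 1)) → Bool,
          ∑ p, ∑ q, ((sketchProd k n A ω m * A m) p q) ^ 2
        ≤ (Fintype.card ((ℓ : Fin k) → Fin (n (ℓ.val + 1)) → Bool) : ℝ)
            * (3 ^ m * ∏ ℓ ∈ Finset.range (m + 1), ∑ i, ∑ j, (A ℓ i j) ^ 2) := by
  intro m
  induction m with
  | zero =>
    intro _
    have h0 : ∀ ω : (ℓ : Fin k) → Fin (n (ℓ.val + 1)) → Bool,
        ∑ p, ∑ q, ((sketchProd k n A ω 0 * A 0) p q) ^ 2 = ∑ p, ∑ q, (A 0 p q) ^ 2 := by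
      intro ω
      show ∑ p, ∑ q, (((1 : Matrix (Fin (n 0)) (Fin (n 0)) ℝ) * A 0) p q) ^ 2 = _
      rw [Matrix.one_mul]
    rw [Finset.sum_congr rfl fun ω _ => h0 ω, Finset.sum_const, nsmul_eq_mul, Finset.card_univ]
    apply le_of_eq
    rw [pow_zero, Finset.prod_range_one, one_mul]
  | succ m ih =>
    intro hm2
    have hlt : m + 1 < k := by omega
    have hm1 : m + 1 ≤ k := by omega
    set mfin : Fin k := ⟨m, by omega⟩ with hmfin
    set K : ((ℓ : Fin k) → Fin (n (ℓ.val + 1)) → Bool) → (Fin (n (m + 1)) → Bool) → ℝ :=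
      fun ω b => ∑ p, ∑ q, ((sketchProd k n A ω m * A m
        * Matrix.vecMulVec (fun t => sg (b t)) (fun t => sg (b t)) * A (m + 1)) p q) ^ 2
      with hKdef
    have hK : ∀ ω c b, K (Function.update ω mfin c) b = K ω b := by
      intro ω c b
      have hdep : sketchProd k n A (Function.update ω mfin c) m = sketchProd k n A ω m := by
        refine sketchProd_congr k n A _ _ m fun ℓ hℓ => ?_
        have hne : ℓ ≠ mfin := by
          rw [hmfin]
          exact Fin.ne_of_val_ne (by simpa using (by omega : (ℓ:ℕ) ≠ m))
        exact Function.update_of_ne hne _ _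
      simp only [hKdef, hdep]
    have hKapp : ∀ ω : (ℓ : Fin k) → Fin (n (ℓ.val + 1)) → Bool,
        ∑ p, ∑ q, ((sketchProd k n A ω (m + 1) * A (m + 1)) p q) ^ 2 = K ω (ω mfin) := by
      intro ω
      rw [sketchProd, dif_pos hlt]
      rfl
    have hce := cond_exp (τ := fun ℓ : Fin k => Fin (n (ℓ.val + 1)) → Bool) mfin K hK
    have hcard : (Fintype.card (Fin (n (mfin.val + 1)) → Bool) : ℝ) = 2 ^ (n (m + 1)) :=
      card_bool_fun _
    rw [hcard] at hce
    -- bound the double sum using key_ineq pointwise in ω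
    have hbound : ∑ ω : (ℓ : Fin k) → Fin (n (ℓ.val + 1)) → Bool, ∑ b, K ω b
        ≤ (2 ^ (n (m + 1)) : ℝ) * ((Fintype.card ((ℓ : Fin k) → Fin (n (ℓ.val + 1)) → Bool) : ℝ)
            * (3 ^ (m + 1) * ∏ ℓ ∈ Finset.range (m + 2), ∑ i, ∑ j, (A ℓ i j) ^ 2)) := by
      have hW : (0:ℝ) ≤ ∑ i, ∑ q, (A (m + 1) i q) ^ 2 :=
        Finset.sum_nonneg fun i _ => Finset.sum_nonneg fun q _ => sq_nonneg _
      calc ∑ ω : (ℓ : Fin k) → Fin (n (ℓ.val + 1)) → Bool, ∑ b, K ω b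
          ≤ ∑ ω : (ℓ : Fin k) → Fin (n (ℓ.val + 1)) → Bool,
              3 * 2 ^ (n (m + 1)) *
                ((∑ p, ∑ i, ((sketchProd k n A ω m * A m) p i) ^ 2)
                  * (∑ i, ∑ q, (A (m + 1) i q) ^ 2)) := by
            refine Finset.sum_le_sum fun ω _ => ?_
            exact key_ineq (sketchProd k n A ω m * A m) (A (m + 1))
        _ = 3 * 2 ^ (n (m + 1)) * ((∑ ω : (ℓ : Fin k) → Fin (n (ℓ.val + 1)) → Bool,
              ∑ p, ∑ i, ((sketchProd k n A ω m * A m) p i) ^ 2)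
                * (∑ i, ∑ q, (A (m + 1) i q) ^ 2)) := by
            conv_rhs => rw [Finset.sum_mul, Finset.mul_sum]
        _ ≤ 3 * 2 ^ (n (m + 1)) * (((Fintype.card ((ℓ : Fin k) → Fin (n (ℓ.val + 1)) → Bool) : ℝ)
              * (3 ^ m * ∏ ℓ ∈ Finset.range (m + 1), ∑ i, ∑ j, (A ℓ i j) ^ 2))
                * (∑ i, ∑ q, (A (m + 1) i q) ^ 2)) := by
            have h3 : (0:ℝ) ≤ 3 * 2 ^ (n (m + 1)) := by positivity
            refine mul_le_mul_of_nonneg_left ?_ h3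
            exact mul_le_mul_of_nonneg_right (ih (by omega)) hW
        _ = (2 ^ (n (m + 1)) : ℝ) * ((Fintype.card ((ℓ : Fin k) → Fin (n (ℓ.val + 1)) → Bool) : ℝ)
              * (3 ^ (m + 1) * ∏ ℓ ∈ Finset.range (m + 2), ∑ i, ∑ j, (A ℓ i j) ^ 2)) := by
            conv_rhs => rw [Finset.prod_range_succ]
            ring
    rw [Finset.sum_congr rfl fun ω _ => hKapp ω]
    have h2pos : (0:ℝ) < 2 ^ (n (m + 1)) := by positivity
    have := hce ▸ hbound
    exact le_of_mul_le_mul_left (by rw [← hce]; exact hbound) h2pos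

lemma sum3_swap {α β γ : Type*} [Fintype α] [Fintype β] [Fintype γ] (f : α → β → γ → ℝ) :
    ∑ a, ∑ b, ∑ c, f a b c = ∑ b, ∑ c, ∑ a, f a b c := by
  rw [Finset.sum_comm]
  exact Finset.sum_congr rfl fun b _ => Finset.sum_comm

lemma var_le {α : Type*} [Fintype α] (x : α → ℝ) (c : ℝ)
    (h : ∑ a, x a = (Fintype.card α : ℝ) * c) :
    ∑ a, (x a - c) ^ 2 ≤ ∑ a, (x a) ^ 2 := by
  have e : ∑ a, (x a - c) ^ 2
      = ∑ a, (x a) ^ 2 - 2 * c * (∑ a, x a) + (Fintype.card α : ℝ) * c ^ 2 := by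
    have h1 : ∀ a ∈ (univ : Finset α), (x a - c) ^ 2 = ((x a) ^ 2 + c ^ 2) - 2 * c * x a :=
      fun a _ => by ring
    rw [Finset.sum_congr rfl h1, Finset.sum_sub_distrib, Finset.sum_add_distrib,
      ← Finset.mul_sum, Finset.sum_const, nsmul_eq_mul, card_univ]
    ring
  rw [e, h]
  have hc : (0:ℝ) ≤ (Fintype.card α : ℝ) * c ^ 2 := by positivity
  nlinarith [hc]

end MMSketch

/-- Independent Rademacher sketches between consecutive matrices: the sketched product
    is an unbiased estimator of A₁⋯A_k, and Tr[Σ] ≤ 3^k ‖A₁‖_F² ⋯ ‖A_k‖_F². -/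
theorem multi_matrix_sketch_mean_and_trace (k : ℕ) (n : ℕ → ℕ)
    (A : ∀ ℓ : ℕ, Matrix (Fin (n ℓ)) (Fin (n (ℓ + 1))) ℝ) :
    (∀ (i : Fin (n 0)) (j : Fin (n k)),
        (∑ ω : (ℓ : Fin k) → Fin (n (ℓ.val + 1)) → Bool,
            (Fintype.card ((ℓ : Fin k) → Fin (n (ℓ.val + 1)) → Bool) : ℝ)⁻¹ *
              sketchProd k n A ω k i j) =
          leftProd n A k i j) ∧
    (∑ ω : (ℓ : Fin k) → Fin (n (ℓ.val + 1)) → Bool,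
        (Fintype.card ((ℓ : Fin k) → Fin (n (ℓ.val + 1)) → Bool) : ℝ)⁻¹ *
          ∑ i, ∑ j, (sketchProd k n A ω k i j - leftProd n A k i j) ^ 2) ≤
      3 ^ k * ∏ ℓ : Fin k, ∑ i, ∑ j, (A ℓ i j) ^ 2 := by
  have hc0 : (Fintype.card ((ℓ : Fin k) → Fin (n (ℓ.val + 1)) → Bool) : ℝ) ≠ 0 :=
    Nat.cast_ne_zero.mpr Fintype.card_ne_zero
  constructor
  · intro i j
    rw [← Finset.mul_sum, MMSketch.mean_lemma k n A k le_rfl i j, ← mul_assoc,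
      inv_mul_cancel₀ hc0, one_mul]
  · have hprodnn : (0:ℝ) ≤ ∏ ℓ : Fin k, ∑ i, ∑ j, (A ℓ i j) ^ 2 :=
      Finset.prod_nonneg fun ℓ _ =>
        Finset.sum_nonneg fun i _ => Finset.sum_nonneg fun j _ => sq_nonneg _
    match k, hc0, hprodnn with
    | 0, hc0, hprodnn =>
      have hz : ∀ ω : (ℓ : Fin 0) → Fin (n (ℓ.val + 1)) → Bool,
          (∑ i, ∑ j, (sketchProd 0 n A ω 0 i j - leftProd n A 0 i j) ^ 2) = 0 := by
        intro ω
        have : sketchProd 0 n A ω 0 = leftProd n A 0 := rfl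
        simp [this]
      rw [Finset.sum_congr rfl fun ω _ => by rw [hz ω, mul_zero]]
      simp
    | (km + 1), hc0, hprodnn =>
      have hident : ∀ ω : (ℓ : Fin (km + 1)) → Fin (n (ℓ.val + 1)) → Bool,
          sketchProd (km + 1) n A ω (km + 1) = sketchProd (km + 1) n A ω km * A km := by
        intro ω
        rw [sketchProd, dif_neg (lt_irrefl _), Matrix.mul_one]
      have hvar := MMSketch.var_lemma (km + 1) n A km le_rfl
      have hstep : ∑ ω : (ℓ : Fin (km + 1)) → Fin (n (ℓ.val + 1)) → Bool,
          ∑ p, ∑ q, (sketchProd (km + 1) n A ω (km + 1) p q - leftProd n A (km + 1) p q) ^ 2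
          ≤ ∑ ω : (ℓ : Fin (km + 1)) → Fin (n (ℓ.val + 1)) → Bool,
              ∑ p, ∑ q, (sketchProd (km + 1) n A ω (km + 1) p q) ^ 2 := by
        rw [MMSketch.sum3_swap, MMSketch.sum3_swap (fun ω p q => (sketchProd (km + 1) n A ω (km + 1) p q) ^ 2)]
        refine Finset.sum_le_sum fun p _ => Finset.sum_le_sum fun q _ => ?_
        exact MMSketch.var_le _ _ (MMSketch.mean_lemma (km + 1) n A (km + 1) le_rfl p q)
      have hbound : ∑ ω : (ℓ : Fin (km + 1)) → Fin (n (ℓ.val + 1)) → Bool,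
          ∑ p, ∑ q, (sketchProd (km + 1) n A ω (km + 1) p q) ^ 2
          ≤ (Fintype.card ((ℓ : Fin (km + 1)) → Fin (n (ℓ.val + 1)) → Bool) : ℝ)
            * (3 ^ km * ∏ ℓ ∈ Finset.range (km + 1), ∑ i, ∑ j, (A ℓ i j) ^ 2) := by
        refine le_trans (le_of_eq ?_) hvar
        exact Finset.sum_congr rfl fun ω _ => by rw [hident ω]
      have hcnn : (0:ℝ) ≤ (Fintype.card ((ℓ : Fin (km + 1)) → Fin (n (ℓ.val + 1)) → Bool) : ℝ)⁻¹ := by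
        positivity
      calc ∑ ω : (ℓ : Fin (km + 1)) → Fin (n (ℓ.val + 1)) → Bool,
            (Fintype.card ((ℓ : Fin (km + 1)) → Fin (n (ℓ.val + 1)) → Bool) : ℝ)⁻¹ *
              ∑ i, ∑ j, (sketchProd (km + 1) n A ω (km + 1) i j - leftProd n A (km + 1) i j) ^ 2
          = (Fintype.card ((ℓ : Fin (km + 1)) → Fin (n (ℓ.val + 1)) → Bool) : ℝ)⁻¹ *
              ∑ ω : (ℓ : Fin (km + 1)) → Fin (n (ℓ.val + 1)) → Bool,
                ∑ i, ∑ j, (sketchProd (km + 1) n A ω (km + 1) i j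
                  - leftProd n A (km + 1) i j) ^ 2 := by
            rw [← Finset.mul_sum]
        _ ≤ (Fintype.card ((ℓ : Fin (km + 1)) → Fin (n (ℓ.val + 1)) → Bool) : ℝ)⁻¹ *
              ((Fintype.card ((ℓ : Fin (km + 1)) → Fin (n (ℓ.val + 1)) → Bool) : ℝ)
                * (3 ^ km * ∏ ℓ ∈ Finset.range (km + 1), ∑ i, ∑ j, (A ℓ i j) ^ 2)) :=
            mul_le_mul_of_nonneg_left (hstep.trans hbound) hcnn
        _ = 3 ^ km * ∏ ℓ ∈ Finset.range (km + 1), ∑ i, ∑ j, (A ℓ i j) ^ 2 := by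
            rw [← mul_assoc, inv_mul_cancel₀ hc0, one_mul]
        _ = 3 ^ km * ∏ ℓ : Fin (km + 1), ∑ i, ∑ j, (A ℓ i j) ^ 2 := by
            rw [Fin.prod_univ_eq_prod_range (fun ℓ => ∑ i, ∑ j, (A ℓ i j) ^ 2) (km + 1)]
        _ ≤ 3 ^ (km + 1) * ∏ ℓ : Fin (km + 1), ∑ i, ∑ j, (A ℓ i j) ^ 2 := by
            refine mul_le_mul_of_nonneg_right ?_ hprodnn
            exact pow_le_pow_right₀ (by norm_num) (Nat.le_succ km)
end
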